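/- arXiv:hep-th/0010184 — 5 statements merged into one kernel-verified Lean document; each statement's English description precedes it below -/
import Mathlib

section
/- Let N ≥ 2 and let q, p : ℝ → ℝ^N be differentiable with q̇_k = p_k. Define c_k = exp((q_k − q_{k+1})/2) for 0 ≤ k ≤ N−2, c_{N−1} = Π_{n=0}^{N−2} c_n^{−1} = exp((q_{N−1} − q_0)/2), v_k = −p_k, and for w ∈ ℂ let L(w) be the matrix obtained from the Jacobi matrix L_0 (diagonal v_k, off-diagonals c_k) by adding the entry w·c_{N−1} in position (N−1, 0), and let A(w) be obtained from A_0 (zero diagonal, (A_0)_{k,k+1} = c_k/2, (A_0)_{k+1,k} = −c_k/2) by adding the entry (1/2)·w·c_{N−1} in position (N−1, 0). Then (q,p) satisfies the open Toda lattice equations if and only if ∂_t L(w)(t) = [A(w)(t), L(w)(t)] holds for every w ∈ ℂ and every t. -/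
set_option maxHeartbeats 1000000
noncomputable def Lmat (N : ℕ) (c v : ℝ → ℕ → ℝ) (w : ℂ) (t : ℝ) : Matrix (Fin N) (Fin N) ℂ :=
  Matrix.of fun i j =>
    (if (i : ℕ) = (j : ℕ) then (v t i : ℂ) else
      if (i : ℕ) + 1 = (j : ℕ) then (c t i : ℂ) else
      if (j : ℕ) + 1 = (i : ℕ) then (c t j : ℂ) else 0) +
    (if (i : ℕ) = N - 1 ∧ (j : ℕ) = 0 then w * (c t (N - 1) : ℂ) else 0)

noncomputable def Amat (N : ℕ) (c : ℝ → ℕ → ℝ) (w : ℂ) (t : ℝ) : Matrix (Fin N) (Fin N) ℂ :=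
  Matrix.of fun i j =>
    (if (i : ℕ) + 1 = (j : ℕ) then (c t i : ℂ) / 2 else
      if (j : ℕ) + 1 = (i : ℕ) then -(c t j : ℂ) / 2 else 0) +
    (if (i : ℕ) = N - 1 ∧ (j : ℕ) = 0 then (1 / 2 : ℂ) * w * (c t (N - 1) : ℂ) else 0)

lemma pw_diag {N : ℕ} (hN : 2 ≤ N) (c v : ℝ → ℕ → ℝ) (w : ℂ) (t : ℝ) (i k : Fin N) :
    Amat N c w t i k * Lmat N c v w t k i - Lmat N c v w t i k * Amat N c w t k i =
      (if (k:ℕ) = (i:ℕ) + 1 then ((c t i : ℂ))^2 else 0)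
    + (if (k:ℕ) + 1 = (i:ℕ) then -((c t ((i:ℕ)-1) : ℂ))^2 else 0) := by
  have hi := i.isLt
  have hk := k.isLt
  simp only [Lmat, Amat, Matrix.of_apply]
  by_cases hk2 : (k:ℕ) + 1 = (i:ℕ)
  · rw [show ((i:ℕ) - 1) = (k:ℕ) by omega]
    split_ifs <;> first | omega | ring
  · split_ifs <;> first | omega | ring

lemma pw_sup {N : ℕ} (hN : 2 ≤ N) (c v : ℝ → ℕ → ℝ) (w : ℂ) (t : ℝ) (i j k : Fin N)
    (hsup : (i:ℕ) + 1 = (j:ℕ)) :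
    Amat N c w t i k * Lmat N c v w t k j - Lmat N c v w t i k * Amat N c w t k j =
      (if (k:ℕ) = (i:ℕ) then -(v t i : ℂ) * (c t i) / 2 else 0)
    + (if (k:ℕ) = (j:ℕ) then (v t j : ℂ) * (c t i) / 2 else 0) := by
  have hi := i.isLt
  have hj := j.isLt
  have hk := k.isLt
  simp only [Lmat, Amat, Matrix.of_apply]
  by_cases hki : (k:ℕ) = (i:ℕ)
  · have : k = i := Fin.ext hki
    subst this
    split_ifs <;> first | omega | ring
  · by_cases hkj : (k:ℕ) = (j:ℕ)
    · have : k = j := Fin.ext hkj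
      subst this
      split_ifs <;> first | omega | ring
    · split_ifs <;> first | omega | ring

lemma pw_sub {N : ℕ} (hN : 2 ≤ N) (c v : ℝ → ℕ → ℝ) (w : ℂ) (t : ℝ) (i j k : Fin N)
    (hsub : (j:ℕ) + 1 = (i:ℕ)) :
    Amat N c w t i k * Lmat N c v w t k j - Lmat N c v w t i k * Amat N c w t k j =
      ((if (k:ℕ) = (j:ℕ) then -(c t j : ℂ) * (v t j) / 2 else 0)
    + (if (k:ℕ) = (i:ℕ) then (v t i : ℂ) * (c t j) / 2 else 0))
    + ((if ((i:ℕ) = N-1 ∧ (j:ℕ) = 0) ∧ (k:ℕ) = 0 then w * (c t (N-1) : ℂ) * (v t j) / 2 else 0)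
    + (if ((i:ℕ) = N-1 ∧ (j:ℕ) = 0) ∧ (k:ℕ) = N-1 then -(w * (c t (N-1) : ℂ) * (v t i) / 2) else 0)) := by
  have hi := i.isLt
  have hj := j.isLt
  have hk := k.isLt
  simp only [Lmat, Amat, Matrix.of_apply]
  by_cases hki : (k:ℕ) = (i:ℕ)
  · have : k = i := Fin.ext hki
    subst this
    split_ifs <;> first | omega | ring
  · by_cases hkj : (k:ℕ) = (j:ℕ)
    · have : k = j := Fin.ext hkj
      subst this
      split_ifs <;> first | omega | ring
    · split_ifs <;> first | omega | ring

lemma pw_corner {N : ℕ} (hN : 2 ≤ N) (c v : ℝ → ℕ → ℝ) (w : ℂ) (t : ℝ) (i j k : Fin N)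
    (hcorn : (i:ℕ) = N - 1 ∧ (j:ℕ) = 0) (hsub : ¬ ((j:ℕ) + 1 = (i:ℕ))) :
    Amat N c w t i k * Lmat N c v w t k j - Lmat N c v w t i k * Amat N c w t k j =
      (if (k:ℕ) = 0 then w * (c t (N-1) : ℂ) * (v t j) / 2 else 0)
    + (if (k:ℕ) = N-1 then -(w * (c t (N-1) : ℂ) * (v t i) / 2) else 0) := by
  have hi := i.isLt
  have hj := j.isLt
  have hk := k.isLt
  simp only [Lmat, Amat, Matrix.of_apply]
  by_cases hki : (k:ℕ) = (i:ℕ)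
  · have : k = i := Fin.ext hki
    subst this
    split_ifs <;> first | omega | ring
  · by_cases hkj : (k:ℕ) = (j:ℕ)
    · have : k = j := Fin.ext hkj
      subst this
      split_ifs <;> first | omega | ring
    · split_ifs <;> first | omega | ring

lemma pw_zero {N : ℕ} (hN : 2 ≤ N) (c v : ℝ → ℕ → ℝ) (w : ℂ) (t : ℝ) (i j k : Fin N)
    (hd : ¬ ((i:ℕ) = (j:ℕ))) (hsup : ¬ ((i:ℕ) + 1 = (j:ℕ))) (hsub : ¬ ((j:ℕ) + 1 = (i:ℕ)))
    (hcorn : ¬ ((i:ℕ) = N - 1 ∧ (j:ℕ) = 0)) :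
    Amat N c w t i k * Lmat N c v w t k j - Lmat N c v w t i k * Amat N c w t k j = 0 := by
  have hi := i.isLt
  have hj := j.isLt
  have hk := k.isLt
  simp only [Lmat, Amat, Matrix.of_apply]
  split_ifs <;> first | omega | ring
lemma sumInd {N : ℕ} (P : Prop) [Decidable P] (m : ℕ) (x : ℂ) :
    ∑ k : Fin N, (if P ∧ (k : ℕ) = m then x else 0) = if P ∧ m < N then x else 0 := by
  by_cases hP : P
  · by_cases hm : m < N
    · rw [if_pos ⟨hP, hm⟩, Finset.sum_eq_single (⟨m, hm⟩ : Fin N)]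
      · simp [hP]
      · intro b _ hb
        rw [if_neg]
        rintro ⟨-, h⟩
        exact hb (Fin.ext h)
      · simp
    · rw [if_neg (by tauto)]
      apply Finset.sum_eq_zero
      intro k _
      rw [if_neg]
      rintro ⟨-, h⟩
      exact hm (h ▸ k.isLt)
  · simp [hP]

lemma sumInd' {N : ℕ} (P : Prop) [Decidable P] (m : ℕ) (x : ℂ) :
    ∑ k : Fin N, (if P ∧ (k : ℕ) + 1 = m then x else 0)
      = if P ∧ 0 < m ∧ m ≤ N then x else 0 := by
  rcases Nat.eq_zero_or_pos m with rfl | hm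
  · simp
  · have h1 : ∀ k : Fin N, (if P ∧ (k : ℕ) + 1 = m then x else 0)
        = (if P ∧ (k : ℕ) = m - 1 then x else 0) := by
      intro k
      refine if_congr (and_congr_right fun _ => by omega) rfl rfl
    rw [Finset.sum_congr rfl fun k _ => h1 k, sumInd]
    refine if_congr (and_congr_right fun _ => by omega) rfl rfl

lemma sumIndE {N : ℕ} (m : ℕ) (x : ℂ) :
    ∑ k : Fin N, (if (k : ℕ) = m then x else 0) = if m < N then x else 0 := by
  have := sumInd (N := N) True m x
  simpa using this

lemma sumIndE' {N : ℕ} (m : ℕ) (x : ℂ) :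
    ∑ k : Fin N, (if (k : ℕ) + 1 = m then x else 0) = if 0 < m ∧ m ≤ N then x else 0 := by
  have := sumInd' (N := N) True m x
  simpa using this

lemma commEntry {N : ℕ} (hN : 2 ≤ N) (c v : ℝ → ℕ → ℝ) (w : ℂ) (t : ℝ) (i j : Fin N) :
    (Amat N c w t * Lmat N c v w t - Lmat N c v w t * Amat N c w t) i j =
      (if (i:ℕ) = (j:ℕ) then
        ((if (i:ℕ)+1 < N then ((c t i : ℂ))^2 else 0)
          - (if 0 < (i:ℕ) then ((c t ((i:ℕ)-1) : ℂ))^2 else 0)) else 0)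
    + (if (i:ℕ)+1 = (j:ℕ) then (c t i : ℂ) * ((v t j : ℂ) - (v t i : ℂ))/2 else 0)
    + (if (j:ℕ)+1 = (i:ℕ) then (c t j : ℂ) * ((v t i : ℂ) - (v t j : ℂ))/2 else 0)
    + (if (i:ℕ) = N-1 ∧ (j:ℕ) = 0 then
        w * (c t (N-1) : ℂ) * ((v t j : ℂ) - (v t i : ℂ))/2 else 0) := by
  have hi := i.isLt
  have hj := j.isLt
  rw [Matrix.sub_apply, Matrix.mul_apply, Matrix.mul_apply, ← Finset.sum_sub_distrib]
  by_cases hd : (i:ℕ) = (j:ℕ)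
  · have : i = j := Fin.ext hd
    subst this
    rw [Finset.sum_congr rfl fun k _ => pw_diag hN c v w t i k, Finset.sum_add_distrib,
      sumIndE, sumIndE']
    split_ifs <;> first | omega | ring
  · by_cases hsup : (i:ℕ) + 1 = (j:ℕ)
    · rw [Finset.sum_congr rfl fun k _ => pw_sup hN c v w t i j k hsup, Finset.sum_add_distrib,
        sumIndE, sumIndE]
      split_ifs <;> first | omega | ring
    · by_cases hsub : (j:ℕ) + 1 = (i:ℕ)
      · rw [Finset.sum_congr rfl fun k _ => pw_sub hN c v w t i j k hsub, Finset.sum_add_distrib,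
          Finset.sum_add_distrib, Finset.sum_add_distrib, sumIndE, sumIndE,
          sumInd, sumInd]
        split_ifs <;> first | omega | ring
      · by_cases hcorn : (i:ℕ) = N - 1 ∧ (j:ℕ) = 0
        · rw [Finset.sum_congr rfl fun k _ => pw_corner hN c v w t i j k hcorn hsub,
            Finset.sum_add_distrib, sumIndE, sumIndE]
          split_ifs <;> first | omega | ring
        · rw [Finset.sum_congr rfl fun k _ => pw_zero hN c v w t i j k hd hsup hsub hcorn]
          rw [Finset.sum_const_zero]
          split_ifs <;> first | omega | ring

section deriv
variable {N : ℕ} (q p c : ℝ → ℕ → ℝ)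
variable (hc : c = fun t k =>
    if k = N - 1 then ∏ n ∈ Finset.range (N - 1), (Real.exp ((q t n - q t (n + 1)) / 2))⁻¹
    else Real.exp ((q t k - q t (k + 1)) / 2))
variable (hqp : ∀ k t, HasDerivAt (fun s => q s k) (p t k) t)

include hc in
lemma c_low (k : ℕ) (hk : k < N - 1) (t : ℝ) :
    c t k = Real.exp ((q t k - q t (k + 1)) / 2) := by
  rw [hc]
  exact if_neg (by omega)

include hc in
lemma c_top (hN : 2 ≤ N) (t : ℝ) :
    c t (N - 1) = Real.exp ((q t (N - 1) - q t 0) / 2) := by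
  rw [hc]
  beta_reduce
  rw [if_pos rfl]
  rw [Finset.prod_congr rfl fun n _ => (Real.exp_neg ((q t n - q t (n + 1)) / 2)).symm,
    ← Real.exp_sum]
  congr 1
  have h2 : ∑ n ∈ Finset.range (N - 1), -((q t n - q t (n + 1)) / 2)
      = (∑ n ∈ Finset.range (N - 1), (q t n - q t (n + 1))) * (-1 / 2) := by
    rw [Finset.sum_mul]
    exact Finset.sum_congr rfl fun n _ => by ring
  rw [h2, Finset.sum_range_sub' (fun n => q t n) (N - 1)]
  ring

include hc hqp in
lemma hasDerivAt_c_low (k : ℕ) (hk : k < N - 1) (t : ℝ) :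
    HasDerivAt (fun s => c s k) (c t k * (p t k - p t (k + 1)) / 2) t := by
  have h1 : (fun s => c s k) = fun s => Real.exp ((q s k - q s (k + 1)) / 2) :=
    funext fun s => c_low q c hc k hk s
  rw [h1, c_low q c hc k hk t]
  have := (((hqp k t).sub (hqp (k + 1) t)).div_const 2).exp
  convert this using 1
  · simp only [Pi.sub_apply]
  · simp only [Pi.sub_apply]; ring

include hc hqp in
lemma hasDerivAt_c_top (hN : 2 ≤ N) (t : ℝ) :
    HasDerivAt (fun s => c s (N - 1)) (c t (N - 1) * (p t (N - 1) - p t 0) / 2) t := by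
  have h1 : (fun s => c s (N - 1)) = fun s => Real.exp ((q s (N - 1) - q s 0) / 2) :=
    funext fun s => c_top q c hc hN s
  rw [h1, c_top q c hc hN t]
  have := (((hqp (N - 1) t).sub (hqp 0 t)).div_const 2).exp
  convert this using 1
  · simp only [Pi.sub_apply]
  · simp only [Pi.sub_apply]; ring

include hc in
lemma csq (k : ℕ) (hk : k < N - 1) (t : ℝ) :
    (c t k) ^ 2 = Real.exp (q t k - q t (k + 1)) := by
  rw [c_low q c hc k hk t, sq, ← Real.exp_add]
  congr 1
  ring

end deriv

lemma real_of_complex_deriv {f : ℝ → ℝ} {r : ℝ} {t : ℝ}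
    (h : HasDerivAt (fun s => (f s : ℂ)) (r : ℂ) t) : HasDerivAt f r t := by
  simpa [Function.comp_def] using Complex.reCLM.hasFDerivAt.comp_hasDerivAt t h

section main
variable {N : ℕ} (q p c v : ℝ → ℕ → ℝ)
variable (hc : c = fun t k =>
    if k = N - 1 then ∏ n ∈ Finset.range (N - 1), (Real.exp ((q t n - q t (n + 1)) / 2))⁻¹
    else Real.exp ((q t k - q t (k + 1)) / 2))
variable (hv : v = fun t k => -p t k)
variable (hqp : ∀ k t, HasDerivAt (fun s => q s k) (p t k) t)

include hc hv hqp in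
lemma toda_forward (hN : 2 ≤ N)
    (ht2 : ∀ k, 1 ≤ k → k ≤ N - 2 → ∀ t, HasDerivAt (fun s => p s k)
      (-Real.exp (q t k - q t (k + 1)) + Real.exp (q t (k - 1) - q t k)) t)
    (ht3 : ∀ t, HasDerivAt (fun s => p s 0) (-Real.exp (q t 0 - q t 1)) t)
    (ht4 : ∀ t, HasDerivAt (fun s => p s (N - 1))
      (Real.exp (q t (N - 2) - q t (N - 1))) t)
    (w : ℂ) (t : ℝ) (i j : Fin N) :
    HasDerivAt (fun s => Lmat N c v w s i j)
      ((Amat N c w t * Lmat N c v w t - Lmat N c v w t * Amat N c w t) i j) t := by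
  have hi := i.isLt
  have hj := j.isLt
  rw [commEntry hN c v w t i j]
  by_cases hd : (i:ℕ) = (j:ℕ)
  · have hfun : (fun s => Lmat N c v w s i j) = fun s => ((-p s (i:ℕ) : ℝ) : ℂ) := by
      funext s
      simp only [Lmat, Matrix.of_apply, hv]
      rw [if_pos hd, if_neg (by omega), add_zero]
    rw [hfun, if_pos hd, if_neg (show ¬((i:ℕ)+1 = (j:ℕ)) by omega),
      if_neg (show ¬((j:ℕ)+1 = (i:ℕ)) by omega),
      if_neg (show ¬((i:ℕ) = N-1 ∧ (j:ℕ) = 0) by omega)]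
    rcases show (i:ℕ) = 0 ∨ (i:ℕ) = N-1 ∨ (1 ≤ (i:ℕ) ∧ (i:ℕ) ≤ N-2) by omega with h0 | htop | hmid
    · rw [h0, if_pos (by omega), if_neg (by omega)]
      have hre : (c t 0)^2 = Real.exp (q t 0 - q t 1) := by
        have h := csq q c hc 0 (by omega) t
        norm_num at h
        exact h
      have hval : (((c t 0 : ℝ) : ℂ))^2 - 0 + 0 + 0 + 0 = ((-(-Real.exp (q t 0 - q t 1)) : ℝ) : ℂ) := by
        norm_cast
        rw [hre]
        ring
      rw [hval]
      exact ((ht3 t).neg).ofReal_comp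
    · rw [htop, if_neg (by omega), if_pos (by omega)]
      have hval : (0 : ℂ) - (((c t (N-1-1) : ℝ) : ℂ))^2 + 0 + 0 + 0
          = ((-(Real.exp (q t (N - 2) - q t (N - 1))) : ℝ) : ℂ) := by
        have hre : (c t (N-2))^2 = Real.exp (q t (N - 2) - q t (N - 1)) := by
          have h := csq q c hc (N-2) (by omega) t
          rw [show N - 2 + 1 = N - 1 by omega] at h
          exact h
        rw [show N - 1 - 1 = N - 2 by omega]
        norm_cast
        rw [hre]
        ring
      rw [hval]
      exact ((ht4 t).neg).ofReal_comp
    · rw [if_pos (by omega), if_pos (by omega)]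
      have hval : (((c t (i:ℕ) : ℝ) : ℂ))^2 - (((c t ((i:ℕ)-1) : ℝ) : ℂ))^2 + 0 + 0 + 0
          = ((-(-Real.exp (q t (i:ℕ) - q t ((i:ℕ) + 1)) + Real.exp (q t ((i:ℕ) - 1) - q t (i:ℕ))) : ℝ) : ℂ) := by
        have hre1 : (c t (i:ℕ))^2 = Real.exp (q t (i:ℕ) - q t ((i:ℕ)+1)) :=
          csq q c hc (i:ℕ) (by omega) t
        have hre2 : (c t ((i:ℕ)-1))^2 = Real.exp (q t ((i:ℕ)-1) - q t (i:ℕ)) := by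
          have h := csq q c hc ((i:ℕ)-1) (by omega) t
          rw [show (i:ℕ) - 1 + 1 = (i:ℕ) by omega] at h
          exact h
        norm_cast
        rw [hre1, hre2]
        ring
      rw [hval]
      exact ((ht2 (i:ℕ) hmid.1 hmid.2 t).neg).ofReal_comp
  · by_cases hsup : (i:ℕ)+1 = (j:ℕ)
    · have hfun : (fun s => Lmat N c v w s i j) = fun s => ((c s (i:ℕ) : ℝ) : ℂ) := by
        funext s
        simp only [Lmat, Matrix.of_apply]
        rw [if_neg hd, if_pos hsup, if_neg (by omega), add_zero]
      rw [hfun, if_neg hd, if_pos hsup, if_neg (show ¬((j:ℕ)+1 = (i:ℕ)) by omega),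
        if_neg (show ¬((i:ℕ) = N-1 ∧ (j:ℕ) = 0) by omega)]
      have hval : (0:ℂ) + (c t (i:ℕ) : ℂ) * ((v t (j:ℕ) : ℂ) - (v t (i:ℕ) : ℂ))/2 + 0 + 0
          = ((c t (i:ℕ) * (p t (i:ℕ) - p t ((i:ℕ)+1)) / 2 : ℝ) : ℂ) := by
        simp only [hv]
        rw [hsup]
        push_cast
        ring
      rw [hval]
      exact (hasDerivAt_c_low q p c hc hqp (i:ℕ) (by omega) t).ofReal_comp
    · by_cases hsub : (j:ℕ)+1 = (i:ℕ)
      · by_cases hcorn : (i:ℕ) = N-1 ∧ (j:ℕ) = 0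
        · have hfun : (fun s => Lmat N c v w s i j)
              = fun s => ((c s (j:ℕ) : ℝ) : ℂ) + w * ((c s (N-1) : ℝ) : ℂ) := by
            funext s
            simp only [Lmat, Matrix.of_apply]
            rw [if_neg hd, if_neg hsup, if_pos hsub, if_pos hcorn]
          rw [hfun, if_neg hd, if_neg hsup, if_pos hsub, if_pos hcorn]
          have h1 := (hasDerivAt_c_low q p c hc hqp (j:ℕ) (by omega) t).ofReal_comp
          have h2 := ((hasDerivAt_c_top q p c hc hqp hN t).ofReal_comp).const_mul w
          have hval : (0:ℂ) + 0 + (c t (j:ℕ) : ℂ) * ((v t (i:ℕ) : ℂ) - (v t (j:ℕ) : ℂ))/2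
              + w * (c t (N-1) : ℂ) * ((v t (j:ℕ) : ℂ) - (v t (i:ℕ) : ℂ))/2
              = ((c t (j:ℕ) * (p t (j:ℕ) - p t ((j:ℕ)+1)) / 2 : ℝ) : ℂ)
                + w * ((c t (N-1) * (p t (N-1) - p t 0) / 2 : ℝ) : ℂ) := by
            simp only [hv]
            rw [hsub, hcorn.1, hcorn.2]
            push_cast
            ring
          rw [hval]
          exact h1.add h2
        · have hfun : (fun s => Lmat N c v w s i j) = fun s => ((c s (j:ℕ) : ℝ) : ℂ) := by
            funext s
            simp only [Lmat, Matrix.of_apply]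
            rw [if_neg hd, if_neg hsup, if_pos hsub, if_neg hcorn, add_zero]
          rw [hfun, if_neg hd, if_neg hsup, if_pos hsub, if_neg hcorn]
          have hval : (0:ℂ) + 0 + (c t (j:ℕ) : ℂ) * ((v t (i:ℕ) : ℂ) - (v t (j:ℕ) : ℂ))/2 + 0
              = ((c t (j:ℕ) * (p t (j:ℕ) - p t ((j:ℕ)+1)) / 2 : ℝ) : ℂ) := by
            simp only [hv]
            rw [hsub]
            push_cast
            ring
          rw [hval]
          exact (hasDerivAt_c_low q p c hc hqp (j:ℕ) (by omega) t).ofReal_comp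
      · by_cases hcorn : (i:ℕ) = N-1 ∧ (j:ℕ) = 0
        · have hfun : (fun s => Lmat N c v w s i j) = fun s => w * ((c s (N-1) : ℝ) : ℂ) := by
            funext s
            simp only [Lmat, Matrix.of_apply]
            rw [if_neg hd, if_neg hsup, if_neg hsub, if_pos hcorn, zero_add]
          rw [hfun, if_neg hd, if_neg hsup, if_neg hsub, if_pos hcorn]
          have hval : (0:ℂ) + 0 + 0 + w * (c t (N-1) : ℂ) * ((v t (j:ℕ) : ℂ) - (v t (i:ℕ) : ℂ))/2
              = w * ((c t (N-1) * (p t (N-1) - p t 0) / 2 : ℝ) : ℂ) := by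
            simp only [hv]
            rw [hcorn.1, hcorn.2]
            push_cast
            ring
          rw [hval]
          exact ((hasDerivAt_c_top q p c hc hqp hN t).ofReal_comp).const_mul w
        · have hfun : (fun s => Lmat N c v w s i j) = fun _ => (0 : ℂ) := by
            funext s
            simp only [Lmat, Matrix.of_apply]
            rw [if_neg hd, if_neg hsup, if_neg hsub, if_neg hcorn, add_zero]
          rw [hfun, if_neg hd, if_neg hsup, if_neg hsub, if_neg hcorn]
          simpa using hasDerivAt_const t (0 : ℂ)
  
end main

section back
variable {N : ℕ} (q p c v : ℝ → ℕ → ℝ)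
variable (hc : c = fun t k =>
    if k = N - 1 then ∏ n ∈ Finset.range (N - 1), (Real.exp ((q t n - q t (n + 1)) / 2))⁻¹
    else Real.exp ((q t k - q t (k + 1)) / 2))
variable (hv : v = fun t k => -p t k)

include hv in
lemma diag_extract (hN : 2 ≤ N)
    (hlax : ∀ w : ℂ, ∀ t : ℝ, ∀ i j : Fin N, HasDerivAt (fun s => Lmat N c v w s i j)
      ((Amat N c w t * Lmat N c v w t - Lmat N c v w t * Amat N c w t) i j) t)
    (k : ℕ) (hk : k < N) (t : ℝ) :
    HasDerivAt (fun s => p s k)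
      ((if 0 < k then (c t (k-1))^2 else 0) - (if k + 1 < N then (c t k)^2 else 0)) t := by
  have h := hlax 0 t ⟨k, hk⟩ ⟨k, hk⟩
  rw [commEntry hN c v 0 t ⟨k, hk⟩ ⟨k, hk⟩] at h
  simp only [Fin.val_mk, if_true] at h
  rw [if_neg (show ¬(k + 1 = k) by omega), if_neg (show ¬(k = N - 1 ∧ k = 0) by omega)] at h
  have hfun : (fun s => Lmat N c v 0 s ⟨k, hk⟩ ⟨k, hk⟩) = fun s => ((-p s k : ℝ) : ℂ) := by
    funext s
    simp only [Lmat, Matrix.of_apply, hv, Fin.val_mk, if_true, eq_self_iff_true]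
    rw [if_neg (show ¬(k = N - 1 ∧ k = 0) by omega), add_zero]
  rw [hfun] at h
  have hval : ((if k + 1 < N then ((c t k : ℝ) : ℂ)^2 else 0)
        - (if 0 < k then ((c t (k-1) : ℝ) : ℂ)^2 else 0) + 0 + 0 + 0)
      = ((-((if 0 < k then (c t (k-1))^2 else 0) - (if k + 1 < N then (c t k)^2 else 0)) : ℝ) : ℂ) := by
    split_ifs <;> push_cast <;> ring
  rw [hval] at h
  have h2 := (real_of_complex_deriv h).neg
  simp only [Pi.neg_def, neg_neg] at h2
  exact h2

include hc hv in
lemma main_aux (hqp : ∀ k t, HasDerivAt (fun s => q s k) (p t k) t) (hN : 2 ≤ N) :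
    ((∀ k < N, ∀ t, HasDerivAt (fun s => q s k) (p t k) t) ∧
      (∀ k, 1 ≤ k → k ≤ N - 2 → ∀ t, HasDerivAt (fun s => p s k)
        (-Real.exp (q t k - q t (k + 1)) + Real.exp (q t (k - 1) - q t k)) t) ∧
      (∀ t, HasDerivAt (fun s => p s 0) (-Real.exp (q t 0 - q t 1)) t) ∧
      (∀ t, HasDerivAt (fun s => p s (N - 1))
        (Real.exp (q t (N - 2) - q t (N - 1))) t))
    ↔ (∀ w : ℂ, ∀ t : ℝ, ∀ i j : Fin N, HasDerivAt (fun s => Lmat N c v w s i j)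
        ((Amat N c w t * Lmat N c v w t - Lmat N c v w t * Amat N c w t) i j) t) := by
  constructor
  · rintro ⟨-, ht2, ht3, ht4⟩ w t i j
    exact toda_forward q p c v hc hv hqp hN ht2 ht3 ht4 w t i j
  · intro hlax
    refine ⟨fun k _ t => hqp k t, ?_, ?_, ?_⟩
    · intro k hk1 hk2 t
      have h := diag_extract p c v hv hN hlax k (by omega) t
      rw [if_pos (by omega), if_pos (by omega)] at h
      rw [csq q c hc (k-1) (by omega) t, show k - 1 + 1 = k by omega,
        csq q c hc k (by omega) t] at h
      convert h using 1
      ring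
    · intro t
      have h := diag_extract p c v hv hN hlax 0 (by omega) t
      rw [if_neg (by omega), if_pos (by omega)] at h
      have hre : (c t 0)^2 = Real.exp (q t 0 - q t 1) := by
        have h2 := csq q c hc 0 (by omega) t
        norm_num at h2
        exact h2
      rw [hre] at h
      convert h using 1
      ring
    · intro t
      have h := diag_extract p c v hv hN hlax (N-1) (by omega) t
      rw [if_pos (by omega), if_neg (by omega)] at h
      have hre : (c t (N-1-1))^2 = Real.exp (q t (N - 2) - q t (N - 1)) := by
        have h2 := csq q c hc (N-1-1) (by omega) t
        rw [show N - 1 - 1 + 1 = N - 1 by omega, show N - 1 - 1 = N - 2 by omega] at h2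
        exact h2
      rw [hre] at h
      convert h using 1
      ring

end back

/-- The open Toda lattice equations are equivalent to the Lax
equation `∂ₜ L(w) = [A(w), L(w)]` holding for every value of the spectral
parameter `w ∈ ℂ`, where `L(w)`, `A(w)` are the Jacobi matrices augmented by
the entries `w·c_{N-1}` and `(1/2)·w·c_{N-1}` in position `(N-1, 0)`. -/
theorem open_toda_lax_with_spectral_parameter (N : ℕ) (hN : 2 ≤ N)
    (q p : ℝ → ℕ → ℝ)
    (hq : ∀ k, Differentiable ℝ (fun t => q t k))
    (hp : ∀ k, Differentiable ℝ (fun t => p t k))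
    (hqp : ∀ k t, HasDerivAt (fun s => q s k) (p t k) t) :
    (let c : ℝ → ℕ → ℝ := fun t k =>
      if k = N - 1 then ∏ n ∈ Finset.range (N - 1), (Real.exp ((q t n - q t (n + 1)) / 2))⁻¹
      else Real.exp ((q t k - q t (k + 1)) / 2)
    let v : ℝ → ℕ → ℝ := fun t k => -p t k
    let L : ℂ → ℝ → Matrix (Fin N) (Fin N) ℂ := fun w t =>
      Matrix.of fun i j =>
        (if (i : ℕ) = (j : ℕ) then (v t i : ℂ) else
          if (i : ℕ) + 1 = (j : ℕ) then (c t i : ℂ) else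
          if (j : ℕ) + 1 = (i : ℕ) then (c t j : ℂ) else 0) +
        (if (i : ℕ) = N - 1 ∧ (j : ℕ) = 0 then w * (c t (N - 1) : ℂ) else 0)
    let A : ℂ → ℝ → Matrix (Fin N) (Fin N) ℂ := fun w t =>
      Matrix.of fun i j =>
        (if (i : ℕ) + 1 = (j : ℕ) then (c t i : ℂ) / 2 else
          if (j : ℕ) + 1 = (i : ℕ) then -(c t j : ℂ) / 2 else 0) +
        (if (i : ℕ) = N - 1 ∧ (j : ℕ) = 0 then (1 / 2 : ℂ) * w * (c t (N - 1) : ℂ) else 0)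
    ((∀ k < N, ∀ t, HasDerivAt (fun s => q s k) (p t k) t) ∧
      (∀ k, 1 ≤ k → k ≤ N - 2 → ∀ t, HasDerivAt (fun s => p s k)
        (-Real.exp (q t k - q t (k + 1)) + Real.exp (q t (k - 1) - q t k)) t) ∧
      (∀ t, HasDerivAt (fun s => p s 0) (-Real.exp (q t 0 - q t 1)) t) ∧
      (∀ t, HasDerivAt (fun s => p s (N - 1))
        (Real.exp (q t (N - 2) - q t (N - 1))) t))
    ↔ (∀ w : ℂ, ∀ t : ℝ, ∀ i j : Fin N, HasDerivAt (fun s => L w s i j)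
        ((A w t * L w t - L w t * A w t) i j) t)) := by
  intro c v L A
  exact main_aux q p c v rfl rfl hqp hN
end

section
/- Let N ≥ 2 and let E_1,…,E_N, γ_1,…,γ_{N−1} be real numbers satisfying the interlacing condition E_1 < γ_1 < E_2 < ⋯ < E_{N−1} < γ_{N−1} < E_N. Then for every n with 0 ≤ n ≤ N−1, the minors Δ_n(n) and Δ_N(n) of the matrix M(n) are both nonzero; in particular Δ_n(n)·Δ_N(n) ≠ 0. -/
open Polynomial Finset

private lemma ivt_poly (p : Polynomial ℝ) {x y : ℝ} (hxy : x < y)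
    (h : p.eval x * p.eval y < 0) : ∃ z, x < z ∧ z < y ∧ p.eval z = 0 := by
  have hc : ContinuousOn (fun t => p.eval t) (Set.Icc x y) := p.continuous.continuousOn
  rcases mul_neg_iff.mp h with ⟨hx, hy⟩ | ⟨hx, hy⟩
  · obtain ⟨z, hz, hz0⟩ := intermediate_value_Ioo' hxy.le hc (Set.mem_Ioo.mpr ⟨hy, hx⟩)
    exact ⟨z, hz.1, hz.2, hz0⟩
  · obtain ⟨z, hz, hz0⟩ := intermediate_value_Ioo hxy.le hc (Set.mem_Ioo.mpr ⟨hx, hy⟩)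
    exact ⟨z, hz.1, hz.2, hz0⟩

private lemma card_roots_finset (p : Polynomial ℝ) (hp : p ≠ 0) (t : Finset ℝ)
    (ht : ∀ x ∈ t, p.eval x = 0) : t.card ≤ p.natDegree := by
  have h1 : t ⊆ p.roots.toFinset := by
    intro x hx
    simp only [Multiset.mem_toFinset, Polynomial.mem_roots']
    exact ⟨hp, ht x hx⟩
  calc t.card ≤ p.roots.toFinset.card := Finset.card_le_card h1
    _ ≤ Multiset.card p.roots := Multiset.toFinset_card_le _
    _ ≤ p.natDegree := p.card_roots'

private lemma Emono (N : ℕ) (E γ : ℕ → ℝ)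
    (hint : ∀ k, 1 ≤ k → k ≤ N - 1 → E k < γ k ∧ γ k < E (k + 1)) :
    ∀ j k, 1 ≤ j → j < k → k ≤ N → E j < E k := by
  intro j k hj hjk hkN
  induction k with
  | zero => omega
  | succ m ih =>
    have hm1 : 1 ≤ m := by omega
    have hm2 : m ≤ N - 1 := by omega
    have h1 : E m < E (m + 1) := lt_trans (hint m hm1 hm2).1 (hint m hm1 hm2).2
    rcases eq_or_lt_of_le (Nat.lt_succ_iff.mp hjk) with h | h
    · rw [h]; exact h1
    · exact lt_trans (ih h (by omega)) h1

private lemma key (N : ℕ) (E γ : ℕ → ℝ) (hN : 2 ≤ N)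
    (hint : ∀ k, 1 ≤ k → k ≤ N - 1 → E k < γ k ∧ γ k < E (k + 1))
    (a b : ℕ) (hab : a + b = N)
    (P R : Polynomial ℝ) (hP : P.degree < (a : ℕ)) (hR : R.degree < (b : ℕ))
    (heq : ∀ i, 1 ≤ i → i ≤ N →
      (∏ s ∈ Finset.Icc 1 (N - 1), (E i - γ s)) * P.eval (E i) = R.eval (E i)) :
    P = 0 ∧ R = 0 := by
  classical
  have hE := Emono N E γ hint
  have hEle : ∀ j k, 1 ≤ j → j ≤ k → k ≤ N → E j ≤ E k := by
    intro j k hj hjk hkN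
    rcases eq_or_lt_of_le hjk with h | h
    · rw [h]
    · exact (hE j k hj h hkN).le
  set q : ℕ → ℝ := fun i => ∏ s ∈ Finset.Icc 1 (N - 1), (E i - γ s) with hq
  -- q i ≠ 0 for 1 ≤ i ≤ N
  have hq_ne : ∀ i, 1 ≤ i → i ≤ N → q i ≠ 0 := by
    intro i h1 h2
    apply Finset.prod_ne_zero_iff.mpr
    intro s hs
    rw [Finset.mem_Icc] at hs
    rcases lt_or_ge s i with h | h
    · have : γ s < E i := by
        calc γ s < E (s + 1) := (hint s hs.1 hs.2).2
          _ ≤ E i := hEle (s + 1) i (by omega) (by omega) h2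
      exact sub_ne_zero_of_ne (ne_of_gt this)
    · have : E i < γ s := by
        calc E i ≤ E s := hEle i s h1 h (by omega)
          _ < γ s := (hint s hs.1 hs.2).1
      exact sub_ne_zero_of_ne (ne_of_lt this)
  -- consecutive sign change of q
  have hqq : ∀ i, 1 ≤ i → i ≤ N - 1 → q i * q (i + 1) < 0 := by
    intro i h1 h2
    have hmem : i ∈ Finset.Icc 1 (N - 1) := Finset.mem_Icc.mpr ⟨h1, h2⟩
    have hprod : q i * q (i + 1)
        = ∏ s ∈ Finset.Icc 1 (N - 1), ((E i - γ s) * (E (i + 1) - γ s)) := by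
      rw [hq]; rw [← Finset.prod_mul_distrib]
    rw [hprod, ← Finset.mul_prod_erase _ _ hmem]
    apply mul_neg_of_neg_of_pos
    · apply mul_neg_of_neg_of_pos
      · exact sub_neg.mpr (hint i h1 h2).1
      · exact sub_pos.mpr (hint i h1 h2).2
    · apply Finset.prod_pos
      intro s hs
      rw [Finset.mem_erase, Finset.mem_Icc] at hs
      obtain ⟨hsi, hs1, hs2⟩ := hs
      rcases lt_or_ge s i with h | h
      · have hgs : γ s < E i :=
          lt_of_lt_of_le (hint s hs1 hs2).2 (hEle (s + 1) i (by omega) (by omega) (by omega))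
        have hgs' : γ s < E (i + 1) :=
          lt_trans hgs (hE i (i + 1) h1 (by omega) (by omega))
        exact mul_pos (sub_pos.mpr hgs) (sub_pos.mpr hgs')
      · have hsi' : i + 1 ≤ s := by omega
        have hgs : E (i + 1) < γ s :=
          lt_of_le_of_lt (hEle (i + 1) s (by omega) hsi' (by omega)) (hint s hs1 hs2).1
        have hgs' : E i < γ s := lt_trans (hE i (i + 1) h1 (by omega) (by omega)) hgs
        exact mul_pos_of_neg_of_neg (sub_neg.mpr hgs') (sub_neg.mpr hgs)
  -- helper: a poly of degree < N vanishing at all E i is zero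
  have hvanish : ∀ p : Polynomial ℝ, p.degree < (N : ℕ) →
      (∀ i, 1 ≤ i → i ≤ N → p.eval (E i) = 0) → p = 0 := by
    intro p hdeg hev
    by_contra hp0
    have hinj : Set.InjOn E ↑(Finset.Icc 1 N) := by
      intro x hx y hy hxy
      simp only [Finset.coe_Icc, Set.mem_Icc] at hx hy
      by_contra hne
      rcases Nat.lt_or_ge x y with h | h
      · exact absurd hxy (ne_of_lt (hE x y hx.1 h hy.2))
      · have : y < x := by omega
        exact absurd hxy.symm (ne_of_lt (hE y x hy.1 this hx.2))
    have hcard : ((Finset.Icc 1 N).image E).card = N := by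
      rw [Finset.card_image_of_injOn hinj, Nat.card_Icc]
      omega
    have hle : ((Finset.Icc 1 N).image E).card ≤ p.natDegree := by
      apply card_roots_finset p hp0
      intro x hx
      obtain ⟨i, hi, rfl⟩ := Finset.mem_image.mp hx
      rw [Finset.mem_Icc] at hi
      exact hev i hi.1 hi.2
    have hnd : p.natDegree < N := (Polynomial.natDegree_lt_iff_degree_lt hp0).mpr hdeg
    omega
  -- dispatch zero cases
  by_cases hP0 : P = 0
  · refine ⟨hP0, ?_⟩
    apply hvanish R (lt_of_lt_of_le hR (by exact_mod_cast (by omega : b ≤ N)))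
    intro i h1 h2
    rw [← heq i h1 h2, hP0]
    simp
  by_cases hR0 : R = 0
  · exfalso
    apply hP0
    apply hvanish P (lt_of_lt_of_le hP (by exact_mod_cast (by omega : a ≤ N)))
    intro i h1 h2
    have := heq i h1 h2
    rw [hR0] at this
    simp only [Polynomial.eval_zero] at this
    rcases mul_eq_zero.mp this with h | h
    · exact absurd h (hq_ne i h1 h2)
    · exact h
  -- main case
  exfalso
  have ha1 : 1 ≤ a := by
    by_contra h
    have : a = 0 := by omega
    rw [this] at hP
    have h0 : P.degree < 0 := by exact_mod_cast hP
    exact hP0 (Polynomial.degree_eq_bot.mp (Nat.WithBot.lt_zero_iff.mp h0))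
  have hb1 : 1 ≤ b := by
    by_contra h
    have : b = 0 := by omega
    rw [this] at hR
    have h0 : R.degree < 0 := by exact_mod_cast hR
    exact hR0 (Polynomial.degree_eq_bot.mp (Nat.WithBot.lt_zero_iff.mp h0))
  have hPd : P.natDegree ≤ a - 1 := by
    have := (Polynomial.natDegree_lt_iff_degree_lt hP0).mpr hP
    omega
  have hRd : R.natDegree ≤ b - 1 := by
    have := (Polynomial.natDegree_lt_iff_degree_lt hR0).mpr hR
    omega
  -- existence of roots in each interval
  have hex : ∀ i, ∃ z, (1 ≤ i ∧ i ≤ N - 1) →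
      ((P.eval z = 0 ∧ E i < z ∧ z ≤ E (i + 1)) ∨
       (R.eval z = 0 ∧ E i ≤ z ∧ z < E (i + 1))) := by
    intro i
    by_cases hi : 1 ≤ i ∧ i ≤ N - 1
    swap
    · exact ⟨0, fun h => absurd h hi⟩
    obtain ⟨h1, h2⟩ := hi
    have hiN : i ≤ N := by omega
    have hi1N : i + 1 ≤ N := by omega
    have hElt : E i < E (i + 1) := hE i (i + 1) h1 (by omega) hi1N
    by_cases hc1 : P.eval (E (i + 1)) = 0
    · exact ⟨E (i + 1), fun _ => Or.inl ⟨hc1, hElt, le_refl _⟩⟩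
    by_cases hc2 : P.eval (E i) = 0
    · refine ⟨E i, fun _ => Or.inr ⟨?_, le_refl _, hElt⟩⟩
      rw [← heq i h1 hiN, hc2, mul_zero]
    -- both nonzero
    have hz1 : q i * q (i + 1) < 0 := hqq i h1 h2
    rcases lt_or_gt_of_ne (mul_ne_zero hc2 hc1) with hPP | hPP
    · -- P changes sign: root of P inside
      obtain ⟨z, hz2, hz3, hz4⟩ := ivt_poly P hElt hPP
      exact ⟨z, fun _ => Or.inl ⟨hz4, hz2, hz3.le⟩⟩
    · -- R changes sign
      have hRR : R.eval (E i) * R.eval (E (i + 1)) < 0 := by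
        rw [← heq i h1 hiN, ← heq (i + 1) (by omega) hi1N]
        have : q i * P.eval (E i) * (q (i + 1) * P.eval (E (i + 1)))
            = (q i * q (i + 1)) * (P.eval (E i) * P.eval (E (i + 1))) := by ring
        rw [this]
        exact mul_neg_of_neg_of_pos hz1 hPP
      obtain ⟨z, hz2, hz3, hz4⟩ := ivt_poly R hElt hRR
      exact ⟨z, fun _ => Or.inr ⟨hz4, hz2.le, hz3⟩⟩
  choose z hz using hex
  set tag : ℕ → Prop := fun i => P.eval (z i) = 0 ∧ E i < z i ∧ z i ≤ E (i + 1) with htag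
  set s : Finset ℕ := Finset.Icc 1 (N - 1) with hs
  set sP : Finset ℕ := s.filter tag with hsP
  set sR : Finset ℕ := s.filter (fun i => ¬ tag i) with hsR
  have hcards : sP.card + sR.card = N - 1 := by
    rw [hsP, hsR, Finset.card_filter_add_card_filter_not, hs, Nat.card_Icc]
    omega
  -- sP bound
  have hsPcard : sP.card ≤ a - 1 := by
    refine le_trans ?_ hPd
    have himg : (sP.image z).card ≤ P.natDegree := by
      apply card_roots_finset P hP0
      intro x hx
      obtain ⟨i, hi, rfl⟩ := Finset.mem_image.mp hx
      exact ((Finset.mem_filter.mp hi).2).1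
    refine le_trans (le_of_eq ?_) himg
    rw [Finset.card_image_of_injOn]
    intro x hx y hy hxy
    simp only [hsP, Finset.mem_coe, Finset.mem_filter, hs, Finset.mem_Icc] at hx hy
    by_contra hne
    have key2 : ∀ u v : ℕ, 1 ≤ u → u ≤ N - 1 → 1 ≤ v → v ≤ N - 1 → u < v →
        tag u → tag v → z u < z v := by
      intro u v hu1 hu2 hv1 hv2 huv htu htv
      calc z u ≤ E (u + 1) := htu.2.2
        _ ≤ E v := hEle (u + 1) v (by omega) (by omega) (by omega)
        _ < z v := htv.2.1
    rcases Nat.lt_or_ge x y with h | h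
    · exact absurd hxy (ne_of_lt (key2 x y hx.1.1 hx.1.2 hy.1.1 hy.1.2 h hx.2 hy.2))
    · have h' : y < x := by omega
      exact absurd hxy.symm (ne_of_lt (key2 y x hy.1.1 hy.1.2 hx.1.1 hx.1.2 h' hy.2 hx.2))
  -- sR bound
  have hsRcard : sR.card ≤ b - 1 := by
    refine le_trans ?_ hRd
    have hprop : ∀ i ∈ sR, R.eval (z i) = 0 ∧ E i ≤ z i ∧ z i < E (i + 1) := by
      intro i hi
      rw [hsR, Finset.mem_filter, hs, Finset.mem_Icc] at hi
      rcases hz i ⟨hi.1.1, hi.1.2⟩ with h | h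
      · exact absurd h hi.2
      · exact h
    have himg : (sR.image z).card ≤ R.natDegree := by
      apply card_roots_finset R hR0
      intro x hx
      obtain ⟨i, hi, rfl⟩ := Finset.mem_image.mp hx
      exact (hprop i hi).1
    refine le_trans (le_of_eq ?_) himg
    rw [Finset.card_image_of_injOn]
    intro x hx y hy hxy
    have hx' := hprop x (Finset.mem_coe.mp hx)
    have hy' := hprop y (Finset.mem_coe.mp hy)
    simp only [hsR, Finset.mem_coe, Finset.mem_filter, hs, Finset.mem_Icc] at hx hy
    by_contra hne
    have key2 : ∀ u v : ℕ, 1 ≤ u → u ≤ N - 1 → 1 ≤ v → v ≤ N - 1 → u < v →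
        (E u ≤ z u ∧ z u < E (u+1)) → (E v ≤ z v ∧ z v < E (v+1)) → z u < z v := by
      intro u v hu1 hu2 hv1 hv2 huv htu htv
      calc z u < E (u + 1) := htu.2
        _ ≤ E v := hEle (u + 1) v (by omega) (by omega) (by omega)
        _ ≤ z v := htv.1
    rcases Nat.lt_or_ge x y with h | h
    · exact absurd hxy (ne_of_lt (key2 x y hx.1.1 hx.1.2 hy.1.1 hy.1.2 h hx'.2 hy'.2))
    · have h' : y < x := by omega
      exact absurd hxy.symm (ne_of_lt (key2 y x hy.1.1 hy.1.2 hx.1.1 hx.1.2 h' hy'.2 hx'.2))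
  omega

private lemma det_aux (N : ℕ) (E γ : ℕ → ℝ) (hN : 2 ≤ N)
    (hint : ∀ k, 1 ≤ k → k ≤ N - 1 → E k < γ k ∧ γ k < E (k + 1))
    (a : ℕ) (ha : a ≤ N)
    (A : Matrix (Fin N) (Fin N) ℝ)
    (hA : ∀ (i c : Fin N), A i c =
      if (c : ℕ) < a then
        (∏ s ∈ Finset.Icc 1 (N - 1), (E ((i : ℕ) + 1) - γ s)) * (E ((i : ℕ) + 1)) ^ (c : ℕ)
      else -(E ((i : ℕ) + 1)) ^ ((c : ℕ) - a)) :
    A.det ≠ 0 := by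
  classical
  intro hdet
  obtain ⟨v, hv, hmul⟩ := (Matrix.exists_mulVec_eq_zero_iff).mpr hdet
  set w : ℕ → ℝ := fun c => if h : c < N then v ⟨c, h⟩ else 0 with hw
  set P : Polynomial ℝ := ∑ c ∈ Finset.range a, Polynomial.C (w c) * Polynomial.X ^ c with hPdef
  set R : Polynomial ℝ := ∑ c ∈ Finset.range (N - a), Polynomial.C (w (a + c)) * Polynomial.X ^ c
    with hRdef
  have hdegaux : ∀ (m : ℕ) (f : ℕ → ℝ),
      (∑ c ∈ Finset.range m, Polynomial.C (f c) * Polynomial.X ^ c).degree < (m : WithBot ℕ) := by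
    intro m f
    apply lt_of_le_of_lt (Polynomial.degree_sum_le _ _)
    apply Finset.sup_lt_iff (by exact_mod_cast WithBot.bot_lt_coe m) |>.mpr
    intro c hc
    apply lt_of_le_of_lt (Polynomial.degree_C_mul_X_pow_le _ _)
    exact_mod_cast Finset.mem_range.mp hc
  have hPdeg : P.degree < (a : WithBot ℕ) := hdegaux a w
  have hRdeg : R.degree < ((N - a : ℕ) : WithBot ℕ) := hdegaux (N - a) _
  -- evaluation identity
  have heq : ∀ i, 1 ≤ i → i ≤ N →
      (∏ s ∈ Finset.Icc 1 (N - 1), (E i - γ s)) * P.eval (E i) = R.eval (E i) := by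
    intro i h1 h2
    set i0 : Fin N := ⟨i - 1, by omega⟩ with hi0
    have hii : (i0 : ℕ) + 1 = i := by simp [hi0]; omega
    have hrow : ∑ c : Fin N, A i0 c * v c = 0 := by
      have := congrFun hmul i0
      simpa [Matrix.mulVec, dotProduct] using this
    set g : ℕ → ℝ := fun c => if h : c < N then A i0 ⟨c, h⟩ * v ⟨c, h⟩ else 0 with hg
    have hrow2 : ∑ c ∈ Finset.range N, g c = 0 := by
      rw [← hrow, ← Fin.sum_univ_eq_sum_range]
      apply Finset.sum_congr rfl
      intro c _
      simp [hg, c.isLt]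
    rw [← Finset.sum_range_add_sum_Ico g ha] at hrow2
    have hpart1 : ∑ c ∈ Finset.range a, g c
        = (∏ s ∈ Finset.Icc 1 (N - 1), (E i - γ s)) * P.eval (E i) := by
      rw [hPdef, Polynomial.eval_finset_sum, Finset.mul_sum]
      apply Finset.sum_congr rfl
      intro c hc
      have hcN : c < N := lt_of_lt_of_le (Finset.mem_range.mp hc) ha
      have hca : c < a := Finset.mem_range.mp hc
      simp only [hg, dif_pos hcN, hA, if_pos hca, hii, hw, dif_pos hcN,
        Polynomial.eval_mul, Polynomial.eval_C, Polynomial.eval_pow, Polynomial.eval_X]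
      ring
    have hpart2 : ∑ c ∈ Finset.Ico a N, g c = -R.eval (E i) := by
      rw [Finset.sum_Ico_eq_sum_range, hRdef, Polynomial.eval_finset_sum, ← Finset.sum_neg_distrib]
      apply Finset.sum_congr rfl
      intro c hc
      have hcN : a + c < N := by
        have := Finset.mem_range.mp hc; omega
      have hca : ¬ (a + c < a) := by omega
      simp only [hg, dif_pos hcN, hA, if_neg hca, hii, hw, dif_pos hcN,
        Polynomial.eval_mul, Polynomial.eval_C, Polynomial.eval_pow, Polynomial.eval_X]
      have : a + c - a = c := by omega
      rw [this]
      ring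
    rw [hpart1, hpart2] at hrow2
    linarith
  obtain ⟨hP0, hR0⟩ := key N E γ hN hint a (N - a) (by omega) P R hPdeg hRdeg heq
  apply hv
  have hcoef : ∀ (m : ℕ) (f : ℕ → ℝ) (k : ℕ), k < m →
      (∑ c ∈ Finset.range m, Polynomial.C (f c) * Polynomial.X ^ c).coeff k = f k := by
    intro m f k hk
    rw [Polynomial.finset_sum_coeff]
    rw [Finset.sum_eq_single k]
    · simp
    · intro b _ hb
      simp [Polynomial.coeff_C_mul, Polynomial.coeff_X_pow, Ne.symm hb]
    · intro hk'
      exact absurd (Finset.mem_range.mpr hk) hk'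
  funext c
  show v c = 0
  rcases Nat.lt_or_ge (c : ℕ) a with hc | hc
  · have h1 : P.coeff (c : ℕ) = w (c : ℕ) := hcoef a w _ hc
    rw [hP0, Polynomial.coeff_zero] at h1
    have h2 : w (c : ℕ) = v c := by simp [hw, c.isLt]
    rw [← h2, ← h1]
  · have hck : (c : ℕ) - a < N - a := by
      have := c.isLt; omega
    have h1 : R.coeff ((c : ℕ) - a) = w (a + ((c : ℕ) - a)) := hcoef (N - a) _ _ hck
    rw [hR0, Polynomial.coeff_zero] at h1
    have hac : a + ((c : ℕ) - a) = (c : ℕ) := by omega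
    rw [hac] at h1
    have h2 : w (c : ℕ) = v c := by simp [hw, c.isLt]
    rw [← h2, ← h1]

/-- For interlacing spectral data `E₁ < γ₁ < E₂ < ⋯ < γ_{N−1} < E_N`,
the minors `Δₙ(n)` and `Δ_N(n)` of the matrix `M(n)` are nonzero, hence
`Δₙ(n)·Δ_N(n) ≠ 0`. -/
theorem interlacing_minors_nonzero (N : ℕ) (hN : 2 ≤ N)
    (E γ : ℕ → ℝ)
    (hint : ∀ k, 1 ≤ k → k ≤ N - 1 → E k < γ k ∧ γ k < E (k + 1)) :
    (let r : ℕ → ℝ := fun i => ∏ s ∈ Finset.Icc 1 (N - 1), (E i - γ s)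
    -- the N×(N+1) matrix M(n); rows i = 1,…,N, columns j = 0,…,N
    let M : ℕ → Matrix (Fin N) (Fin (N + 1)) ℝ := fun n =>
      Matrix.of fun i j =>
        if (j : ℕ) ≤ n then r ((i : ℕ) + 1) * (E ((i : ℕ) + 1)) ^ (j : ℕ)
        else -(E ((i : ℕ) + 1)) ^ ((j : ℕ) - n - 1)
    -- Δ_j(n): determinant of M(n) with column j deleted
    let Δ : Fin (N + 1) → ℕ → ℝ := fun j n =>
      Matrix.det ((M n).submatrix id j.succAbove)
    ∀ n : ℕ, ∀ _ : n ≤ N - 1,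
      Δ ⟨n, by omega⟩ n ≠ 0 ∧ Δ ⟨N, by omega⟩ n ≠ 0 ∧
      Δ ⟨n, by omega⟩ n * Δ ⟨N, by omega⟩ n ≠ 0) := by
  intro r M Δ n hn
  have h1 : Δ ⟨n, by omega⟩ n ≠ 0 := by
    apply det_aux N E γ hN hint n (by omega)
    intro i c
    simp only [Δ, M, r, Matrix.submatrix_apply, id_eq, Matrix.of_apply]
    rcases Nat.lt_or_ge (c : ℕ) n with hc | hc
    · have hsa : (⟨n, by omega⟩ : Fin (N + 1)).succAbove c = c.castSucc := by
        rw [Fin.succAbove]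
        rw [if_pos]
        simpa [Fin.lt_def] using hc
      rw [hsa, if_pos hc]
      rw [if_pos (by simpa using hc.le)]
      simp
    · have hsa : (⟨n, by omega⟩ : Fin (N + 1)).succAbove c = c.succ := by
        rw [Fin.succAbove]
        rw [if_neg]
        simp only [Fin.lt_def, Fin.coe_castSucc]
        omega
      rw [hsa]
      simp only [Fin.val_succ]
      rw [if_neg (by omega), if_neg (by omega)]
      congr 2
      omega
  have h2 : Δ ⟨N, by omega⟩ n ≠ 0 := by
    apply det_aux N E γ hN hint (n + 1) (by omega)
    intro i c
    simp only [Δ, M, r, Matrix.submatrix_apply, id_eq, Matrix.of_apply]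
    have hsa : (⟨N, by omega⟩ : Fin (N + 1)).succAbove c = c.castSucc := by
      rw [Fin.succAbove]
      rw [if_pos]
      simp only [Fin.lt_def, Fin.coe_castSucc]
      exact c.isLt
    rw [hsa]
    simp only [Fin.coe_castSucc]
    rcases Nat.lt_or_ge (c : ℕ) (n + 1) with hc | hc
    · rw [if_pos hc, if_pos (by omega)]
    · rw [if_neg (by omega), if_neg (by omega)]
      rw [Nat.sub_sub]
  exact ⟨h1, h2, mul_ne_zero h1 h2⟩
end

section
/- Let N ≥ 2, let v_0,…,v_{N−1} be real and c_0,…,c_{N−2} > 0, and let P(E) = det(E·I − L_0) be the characteristic polynomial of the Jacobi matrix L_0. Let ψ_n(E) be the polynomials determined by ψ_0 = 1 and the forward recurrence c_0ψ_1 = (E−v_0)ψ_0, c_nψ_{n+1} = (E−v_n)ψ_n − c_{n−1}ψ_{n−1} (1 ≤ n ≤ N−2), and let φ_n(E) be determined by φ_{N−1} = 1 and the backward recurrence c_{N−2}φ_{N−2} = (E−v_{N−1})φ_{N−1}, c_{n−1}φ_{n−1} = (E−v_n)φ_n − c_nφ_{n+1} (1 ≤ n ≤ N−2). Then for all E: Σ_{n=0}^{N−1}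 ψ_n(E) φ_n(E) = P′(E) / (c_0 c_1 ⋯ c_{N−2}), where P′ denotes the derivative of P. -/
def triEnt (d e : ℕ → ℝ) (i j : ℕ) : ℝ :=
  if i = j then d i else if i + 1 = j then e i else if j + 1 = i then e j else 0

lemma triEnt_diag (d e : ℕ → ℝ) (k : ℕ) : triEnt d e k k = d k := by simp [triEnt]

lemma triEnt_lower (d e : ℕ → ℝ) (k : ℕ) : triEnt d e (k+1) k = e k := by
  unfold triEnt; rw [if_neg (by omega), if_neg (by omega), if_pos rfl]

lemma triEnt_upper (d e : ℕ → ℝ) (k : ℕ) : triEnt d e k (k+1) = e k := by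
  unfold triEnt; rw [if_neg (by omega), if_pos rfl]

lemma triEnt_far (d e : ℕ → ℝ) {i j : ℕ} (h : j + 2 ≤ i ∨ i + 2 ≤ j) :
    triEnt d e i j = 0 := by
  unfold triEnt; rw [if_neg (by omega), if_neg (by omega), if_neg (by omega)]

/-- Auxiliary symmetric tridiagonal matrix. -/
def jacTri (d e : ℕ → ℝ) (n : ℕ) : Matrix (Fin n) (Fin n) ℝ :=
  Matrix.of fun i j => triEnt d e i j

lemma jacTri_apply (d e : ℕ → ℝ) {n : ℕ} (i j : Fin n) :
    jacTri d e n i j = triEnt d e i j := rfl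

lemma jacTri_submatrix (d e : ℕ → ℝ) {m n : ℕ} (f g : Fin m → Fin n)
    (hf : ∀ i, ((f i : Fin n) : ℕ) = (i : ℕ)) (hg : ∀ j, ((g j : Fin n) : ℕ) = (j : ℕ)) :
    (jacTri d e n).submatrix f g = jacTri d e m := by
  ext i j
  simp [jacTri, hf, hg]

lemma jacTri_det_rec (d e : ℕ → ℝ) (n : ℕ) :
    (jacTri d e (n + 2)).det
      = d (n + 1) * (jacTri d e (n + 1)).det - e n * e n * (jacTri d e n).det := by
  rw [Matrix.det_succ_row _ (Fin.last (n + 1))]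
  rw [Fin.sum_univ_castSucc, Fin.sum_univ_castSucc]
  have hz : ∀ j : Fin n,
      (-1 : ℝ) ^ ((Fin.last (n+1) : ℕ) + ((Fin.castSucc (Fin.castSucc j)) : ℕ))
        * jacTri d e (n+2) (Fin.last (n+1)) (Fin.castSucc (Fin.castSucc j))
        * ((jacTri d e (n+2)).submatrix (Fin.last (n+1)).succAbove
            (Fin.castSucc (Fin.castSucc j)).succAbove).det = 0 := by
    intro j
    have hj : (j : ℕ) < n := j.isLt
    rw [jacTri_apply, triEnt_far d e (Or.inl (by
      simp only [Fin.coe_castSucc, Fin.val_last]; omega))]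
    ring
  rw [Finset.sum_eq_zero (fun j _ => hz j), zero_add]
  have hentry1 : jacTri d e (n+2) (Fin.last (n+1)) (Fin.castSucc (Fin.last n)) = e n := by
    rw [jacTri_apply]
    simp only [Fin.coe_castSucc, Fin.val_last]
    exact triEnt_lower d e n
  have hentry2 : jacTri d e (n+2) (Fin.last (n+1)) (Fin.last (n+1)) = d (n+1) := by
    rw [jacTri_apply]
    simp only [Fin.val_last]
    exact triEnt_diag d e (n+1)
  have hminor2 : (jacTri d e (n+2)).submatrix (Fin.last (n+1)).succAbove
      (Fin.last (n+1)).succAbove = jacTri d e (n+1) := by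
    rw [Fin.succAbove_last]
    exact jacTri_submatrix d e _ _ (fun i => rfl) (fun j => rfl)
  set B := (jacTri d e (n+2)).submatrix (Fin.last (n+1)).succAbove
      (Fin.castSucc (Fin.last n)).succAbove with hB
  have hcol : ∀ i : Fin (n+1), B i (Fin.last n) = if (i : ℕ) = n then e n else 0 := by
    intro i
    have hsA : (Fin.castSucc (Fin.last n)).succAbove (Fin.last n) = Fin.last (n+1) := by
      rw [Fin.succAbove_of_le_castSucc _ _ (le_refl _)]
      rfl
    rw [hB]
    simp only [Matrix.submatrix_apply, Fin.succAbove_last, hsA]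
    rw [jacTri_apply]
    simp only [Fin.coe_castSucc, Fin.val_last]
    by_cases h : (i : ℕ) = n
    · rw [if_pos h, h, triEnt_upper]
    · rw [if_neg h, triEnt_far d e (Or.inr (by have := i.isLt; omega))]
  have hBdet : B.det = e n * (jacTri d e n).det := by
    rw [Matrix.det_succ_column _ (Fin.last n)]
    rw [Fin.sum_univ_castSucc]
    have hz2 : ∀ i : Fin n,
        (-1 : ℝ) ^ (((Fin.castSucc i : Fin (n+1)) : ℕ) + ((Fin.last n : Fin (n+1)) : ℕ))
          * B (Fin.castSucc i) (Fin.last n)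
          * (B.submatrix (Fin.castSucc i).succAbove (Fin.last n).succAbove).det = 0 := by
      intro i
      rw [hcol]
      rw [if_neg (by simp only [Fin.coe_castSucc]; exact Nat.ne_of_lt i.isLt)]
      ring
    rw [Finset.sum_eq_zero (fun i _ => hz2 i), zero_add]
    rw [hcol, if_pos (Fin.val_last n)]
    have hminor : B.submatrix (Fin.last n).succAbove (Fin.last n).succAbove
        = jacTri d e n := by
      rw [Fin.succAbove_last, hB, Matrix.submatrix_submatrix]
      refine jacTri_submatrix d e _ _ (fun i => by simp [Fin.succAbove_last]) (fun j => ?_)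
      show (((Fin.castSucc (Fin.last n)).succAbove (Fin.castSucc j) : Fin (n+2)) : ℕ) = (j : ℕ)
      rw [Fin.succAbove_of_castSucc_lt]
      · rfl
      · rw [Fin.lt_def]
        simp only [Fin.coe_castSucc, Fin.val_last]
        exact j.isLt
    rw [hminor]
    have hev : (-1 : ℝ) ^ (((Fin.last n : Fin (n+1)) : ℕ) + ((Fin.last n : Fin (n+1)) : ℕ)) = 1 :=
      Even.neg_one_pow ⟨n, by simp only [Fin.val_last]; try omega⟩
    rw [hev]; ring
  rw [hentry1, hentry2, hminor2, hBdet]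
  have h1 : (-1 : ℝ) ^ (((Fin.last (n+1) : Fin (n+2)) : ℕ) + ((Fin.castSucc (Fin.last n) : Fin (n+2)) : ℕ)) = -1 :=
    Odd.neg_one_pow ⟨n, by simp only [Fin.val_last, Fin.coe_castSucc]; try omega⟩
  have h2 : (-1 : ℝ) ^ (((Fin.last (n+1) : Fin (n+2)) : ℕ) + ((Fin.last (n+1) : Fin (n+2)) : ℕ)) = 1 :=
    Even.neg_one_pow ⟨n+1, by simp only [Fin.val_last]; try omega⟩
  rw [h1, h2]; ring

lemma jacTri_det_zero (d e : ℕ → ℝ) : (jacTri d e 0).det = 1 := by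
  simp [Matrix.det_fin_zero]

lemma jacTri_det_one (d e : ℕ → ℝ) : (jacTri d e 1).det = d 0 := by
  rw [Matrix.det_fin_one]
  rw [jacTri_apply]
  exact triEnt_diag d e 0

/-- For the forward and backward eigenpolynomials `ψₙ`, `φₙ` of a
Jacobi matrix `L₀` one has `Σₙ ψₙ(E)φₙ(E) = P′(E)/(c₀⋯c_{N−2})`, where `P` is
the characteristic polynomial of `L₀`. -/
theorem jacobi_eigenfunction_pairing (N : ℕ) (hN : 2 ≤ N)
    (v c : ℕ → ℝ) (hc : ∀ n ≤ N - 2, 0 < c n)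
    (ψ φ : ℕ → ℝ → ℝ)
    (hψ0 : ∀ E, ψ 0 E = 1)
    (hψ1 : ∀ E, c 0 * ψ 1 E = (E - v 0) * ψ 0 E)
    (hψ : ∀ n, 1 ≤ n → n ≤ N - 2 → ∀ E,
      c n * ψ (n + 1) E = (E - v n) * ψ n E - c (n - 1) * ψ (n - 1) E)
    (hφ0 : ∀ E, φ (N - 1) E = 1)
    (hφ1 : ∀ E, c (N - 2) * φ (N - 2) E = (E - v (N - 1)) * φ (N - 1) E)
    (hφ : ∀ n, 1 ≤ n → n ≤ N - 2 → ∀ E,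
      c (n - 1) * φ (n - 1) E = (E - v n) * φ n E - c n * φ (n + 1) E) :
    (let L₀ : Matrix (Fin N) (Fin N) ℝ :=
      Matrix.of fun i j =>
        if (i : ℕ) = (j : ℕ) then v i else
          if (i : ℕ) + 1 = (j : ℕ) then c i else
          if (j : ℕ) + 1 = (i : ℕ) then c j else 0
    let P : ℝ → ℝ := fun x =>
      Matrix.det (x • (1 : Matrix (Fin N) (Fin N) ℝ) - L₀)
    ∀ E : ℝ, ∑ n ∈ Finset.range N, ψ n E * φ n E
      = deriv P E / ∏ k ∈ Finset.range (N - 1), c k) := by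
  intro L₀ P E
  obtain ⟨m, rfl⟩ : ∃ m, N = m + 2 := ⟨N - 2, by omega⟩
  have hm2 : m + 2 - 2 = m := rfl
  have hm1 : m + 2 - 1 = m + 1 := rfl
  rw [hm2] at hc hφ1 hφ
  rw [hm1] at hφ0 hφ1 ⊢
  rw [hm2] at hψ
  -- P as determinant of jacTri
  have hPx : ∀ x : ℝ, P x = (jacTri (fun i => x - v i) (fun i => -(c i)) (m + 2)).det := by
    intro x
    show Matrix.det _ = _
    congr 1
    ext i j
    simp only [Matrix.sub_apply, Matrix.smul_apply, Matrix.one_apply, L₀, Matrix.of_apply,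
      smul_eq_mul, jacTri, triEnt]
    by_cases hij : (i : ℕ) = (j : ℕ)
    · have hij' : i = j := Fin.ext hij
      subst hij'
      simp
    · have hne : ¬ i = j := fun h => hij (congrArg Fin.val h)
      rw [if_neg hne, if_neg hij, if_neg hij]
      split_ifs <;> ring
  -- forward minors and ψ
  have hkey : ∀ n, n ≤ m + 1 → ∀ x : ℝ,
      (∏ k ∈ Finset.range n, c k) * ψ n x
        = (jacTri (fun i => x - v i) (fun i => -(c i)) n).det := by
    intro n
    induction n using Nat.twoStepInduction with
    | zero => intro _ x; rw [jacTri_det_zero]; simp [hψ0]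
    | one =>
      intro _ x
      rw [jacTri_det_one]
      have := hψ1 x
      rw [hψ0] at this
      simp only [Finset.prod_range_one]
      rw [this]; ring
    | more n ih1 ih2 =>
      intro hn x
      have h1 := ih1 (by omega) x
      have h2 := ih2 (by omega) x
      have hr := hψ (n + 1) (by omega) (by omega) x
      have hdet := jacTri_det_rec (fun i => x - v i) (fun i => -(c i)) n
      rw [Finset.prod_range_succ, Finset.prod_range_succ]
      rw [Finset.prod_range_succ] at h2
      have hsimp : (n + 1 : ℕ) - 1 = n := rfl
      rw [hsimp] at hr
      rw [hdet]
      linear_combination ((∏ k ∈ Finset.range n, c k) * c n) * hr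
        + (x - v (n + 1)) * h2 - (c n * c n) * h1
  set Cpr : ℝ := ∏ k ∈ Finset.range (m + 1), c k with hCpr
  have hCpr_ne : Cpr ≠ 0 := by
    refine ne_of_gt (Finset.prod_pos fun k hk => hc k ?_)
    have := Finset.mem_range.mp hk; omega
  -- P in terms of ψ
  have hdetT : ∀ x : ℝ, P x = Cpr * ((x - v (m + 1)) * ψ (m + 1) x - c m * ψ m x) := by
    intro x
    rw [hPx x, jacTri_det_rec]
    have h1 := hkey (m + 1) (le_refl _) x
    have h2 := hkey m (by omega) x
    rw [hCpr, Finset.prod_range_succ] at *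
    linear_combination (-(x - v (m + 1))) * h1 + (c m * c m) * h2
  -- Green's identity
  set S : ℝ := (E - v 0) * φ 0 E - c 0 * φ 1 E with hSdef
  have hGx : ∀ x : ℝ, (x - E) * (∑ n ∈ Finset.range (m + 2), ψ n x * φ n E)
      = ((x - v (m + 1)) * ψ (m + 1) x - c m * ψ m x) - S := by
    intro x
    set V : ℕ → ℝ := fun n => match n with
      | 0 => S
      | k + 1 => c k * (ψ (k + 1) x * φ k E - ψ k x * φ (k + 1) E) with hV
    have hstep : ∀ n ∈ Finset.range (m + 1),
        (x - E) * (ψ n x * φ n E) = V (n + 1) - V n := by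
      intro n hn
      have hn' := Finset.mem_range.mp hn
      match n with
      | 0 =>
        show (x - E) * (ψ 0 x * φ 0 E)
          = c 0 * (ψ 1 x * φ 0 E - ψ 0 x * φ 1 E) - S
        have e1 := hψ1 x
        have e2 := hψ0 x
        rw [hSdef]
        linear_combination (-(φ 0 E)) * e1 + ((v 0 - E) * φ 0 E + c 0 * φ 1 E) * e2
      | k + 1 =>
        show (x - E) * (ψ (k + 1) x * φ (k + 1) E)
          = c (k + 1) * (ψ (k + 2) x * φ (k + 1) E - ψ (k + 1) x * φ (k + 2) E)
            - c k * (ψ (k + 1) x * φ k E - ψ k x * φ (k + 1) E)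
        have e1 := hψ (k + 1) (by omega) (by omega) x
        have e2 := hφ (k + 1) (by omega) (by omega) E
        have hsimp : (k + 1 : ℕ) - 1 = k := rfl
        rw [hsimp] at e1 e2
        linear_combination (-(φ (k + 1) E)) * e1 + (ψ (k + 1) x) * e2
    have htel : ∑ n ∈ Finset.range (m + 1), (V (n + 1) - V n) = V (m + 1) - V 0 :=
      Finset.sum_range_sub V (m + 1)
    rw [Finset.sum_range_succ, mul_add, Finset.mul_sum,
      Finset.sum_congr rfl hstep, htel]
    show c m * (ψ (m + 1) x * φ m E - ψ m x * φ (m + 1) E) - S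
        + (x - E) * (ψ (m + 1) x * φ (m + 1) E) = _
    have e1 := hφ0 E
    have e2 := hφ1 E
    linear_combination (ψ (m + 1) x) * e2
      + ((x - v (m + 1)) * ψ (m + 1) x - c m * ψ m x) * e1
  have hS : S = (E - v (m + 1)) * ψ (m + 1) E - c m * ψ m E := by
    have := hGx E
    simp only [sub_self, zero_mul] at this
    linarith
  -- continuity of the ψ's
  have hψcont : ∀ n, n ≤ m + 1 → Continuous (fun x => ψ n x) := by
    intro n
    induction n using Nat.twoStepInduction with
    | zero =>
      intro _
      have : (fun x => ψ 0 x) = fun _ => (1 : ℝ) := funext hψ0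
      rw [this]; exact continuous_const
    | one =>
      intro _
      have hc0 : c 0 ≠ 0 := (hc 0 (Nat.zero_le m)).ne'
      have : (fun x => ψ 1 x) = fun x => (x - v 0) / c 0 := by
        funext x
        rw [eq_div_iff hc0]
        linear_combination hψ1 x + (x - v 0) * hψ0 x
      rw [this]
      exact (continuous_id.sub continuous_const).div_const _
    | more n ih1 ih2 =>
      intro hn
      have hcn : c (n + 1) ≠ 0 := (hc (n + 1) (by omega)).ne'
      have heq : (fun x => ψ (n + 2) x)
          = fun x => ((x - v (n + 1)) * ψ (n + 1) x - c n * ψ n x) / c (n + 1) := by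
        funext x
        rw [eq_div_iff hcn]
        have e1 := hψ (n + 1) (by omega) (by omega) x
        have hsimp : (n + 1 : ℕ) - 1 = n := rfl
        rw [hsimp] at e1
        linear_combination e1
      rw [heq]
      exact (((continuous_id.sub continuous_const).mul (ih2 (by omega))).sub
        (continuous_const.mul (ih1 (by omega)))).div_const _
  have hGcont : Continuous (fun x => ∑ n ∈ Finset.range (m + 2), ψ n x * φ n E) := by
    refine continuous_finset_sum _ fun n hn => ?_
    exact (hψcont n (by have := Finset.mem_range.mp hn; omega)).mul continuous_const
  -- derivative of P
  have hPdiff : ∀ x : ℝ, P x - P E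
      = Cpr * ((x - E) * (∑ n ∈ Finset.range (m + 2), ψ n x * φ n E)) := by
    intro x
    rw [hdetT x, hdetT E, hGx x, hS]
    ring
  have hderiv : HasDerivAt P (Cpr * (∑ n ∈ Finset.range (m + 2), ψ n E * φ n E)) E := by
    rw [hasDerivAt_iff_tendsto_slope]
    have h1 : Filter.Tendsto (fun x => Cpr * (∑ n ∈ Finset.range (m + 2), ψ n x * φ n E))
        (nhdsWithin E {E}ᶜ)
        (nhds (Cpr * (∑ n ∈ Finset.range (m + 2), ψ n E * φ n E))) :=
      ((continuous_const.mul hGcont).tendsto E).mono_left nhdsWithin_le_nhds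
    refine h1.congr' ?_
    filter_upwards [self_mem_nhdsWithin] with x hx
    have hxE : x - E ≠ 0 := sub_ne_zero.mpr hx
    rw [slope_def_field, hPdiff x]
    field_simp
  rw [hderiv.deriv, mul_div_cancel_left₀ _ hCpr_ne]
end

section
/- Let N ≥ 2, let v_0,…,v_{N−1} be real and c_0,…,c_{N−2} > 0, let ψ_n(E) and φ_n(E) be as in the forward and backward recurrences, let γ_1,…,γ_{N−1} be the eigenvalues of the truncated matrix L_1 (L_0 with first row and column deleted), and define χ_1(n) for 1 ≤ n ≤ N−1 as the ratio of the coefficient of E^{n−1} to the coefficient of E^n in ψ_n(E), and χ_1^σ(n) for 0 ≤ n ≤ N−2 as the ratio of the coefficient of E^{N−2−n} to the coefficient of E^{N−1−n} in φ_n(E), plus Σ_{s=1}^{N−1} γ_s. Then χ_1(n+1) + χ_1^σ(n) = −v_0 for every n with 0 ≤ n ≤ N−2. -/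
open Polynomial
open Finset


lemma cancelC {a : ℝ} (ha : a ≠ 0) {p q : Polynomial ℝ} (h : C a * p = q) :
    p = C a⁻¹ * q := by
  rw [← h, ← mul_assoc, ← C_mul, inv_mul_cancel₀ ha, C_1, one_mul]

lemma jacobi_aux (M : ℕ) (v c : ℕ → ℝ) (hc : ∀ k ≤ M, c k ≠ 0) (ψ : ℕ → Polynomial ℝ)
    (h0 : ψ 0 = 1) (h1 : C (c 0) * ψ 1 = (X - C (v 0)) * ψ 0)
    (h : ∀ n, 1 ≤ n → n ≤ M →
      C (c n) * ψ (n + 1) = (X - C (v n)) * ψ n - C (c (n - 1)) * ψ (n - 1)) :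
    ∀ n ≤ M + 1, (∀ m, n < m → (ψ n).coeff m = 0) ∧
      (ψ n).coeff n = (∏ k ∈ range n, c k)⁻¹ ∧
      (1 ≤ n → (ψ n).coeff (n - 1) = -(∑ k ∈ range n, v k) * (∏ k ∈ range n, c k)⁻¹) := by
  set Q : ℕ → Prop := fun n => (∀ m, n < m → (ψ n).coeff m = 0) ∧
      (ψ n).coeff n = (∏ k ∈ range n, c k)⁻¹ ∧
      (1 ≤ n → (ψ n).coeff (n - 1) = -(∑ k ∈ range n, v k) * (∏ k ∈ range n, c k)⁻¹) with hQ
  have q0 : Q 0 := by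
    refine ⟨fun m hm => ?_, by simp [h0], by omega⟩
    rw [h0, coeff_one, if_neg (by omega)]
  have key : ∀ n, n + 1 ≤ M + 1 → Q n ∧ Q (n + 1) := by
    intro n
    induction n with
    | zero =>
      intro _
      have hc0 := hc 0 (by omega)
      have hψ1 : ψ 1 = C (c 0)⁻¹ * (X - C (v 0)) := by
        simpa [h0] using cancelC hc0 h1
      refine ⟨q0, fun m hm => ?_, ?_, fun _ => ?_⟩
      · obtain ⟨k, rfl⟩ : ∃ k, m = k + 2 := ⟨m - 2, by omega⟩
        simp [hψ1, coeff_C, mul_sub, coeff_X]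
      · simp [hψ1, coeff_C, mul_sub]
      · simp [hψ1, coeff_C, mul_sub]; ring
    | succ n ih =>
      intro hn1
      obtain ⟨qn, qn1⟩ := ih (by omega)
      refine ⟨qn1, ?_⟩
      have hcn1 := hc (n + 1) (by omega)
      have hrec : ψ (n + 2) = C (c (n+1))⁻¹ *
          ((X - C (v (n+1))) * ψ (n+1) - C (c n) * ψ n) := by
        have := h (n+1) (by omega) (by omega)
        simpa using cancelC hcn1 this
      have coeff_eq : ∀ k : ℕ, (ψ (n+2)).coeff (k+1) =
          (c (n+1))⁻¹ * ((ψ (n+1)).coeff k - v (n+1) * (ψ (n+1)).coeff (k+1)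
            - c n * (ψ n).coeff (k+1)) := by
        intro k
        rw [hrec]
        rw [coeff_C_mul, coeff_sub, coeff_C_mul, sub_mul, coeff_sub, coeff_X_mul,
          coeff_C_mul]
      refine ⟨fun m hm => ?_, ?_, fun _ => ?_⟩
      · obtain ⟨k, rfl⟩ : ∃ k, m = k + 1 := ⟨m - 1, by omega⟩
        rw [coeff_eq, qn1.1 k (by omega), qn1.1 (k+1) (by omega), qn.1 (k+1) (by omega)]
        ring
      · show (ψ (n+2)).coeff (n+2) = _
        rw [show n + 2 = (n+1)+1 from rfl, coeff_eq, qn1.2.1,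
          qn1.1 (n+2) (by omega), qn.1 (n+2) (by omega),
          prod_range_succ c (n+1), mul_inv]
        ring
      · have e1 : (ψ (n+1)).coeff n = -(∑ k ∈ range (n+1), v k) * (∏ k ∈ range (n+1), c k)⁻¹ := by
          simpa using qn1.2.2 (by omega)
        show (ψ (n+2)).coeff (n+1) = -(∑ k ∈ range (n+2), v k) * (∏ k ∈ range (n+2), c k)⁻¹
        rw [coeff_eq n, e1, qn1.2.1, qn.1 (n+1) (by omega),
          prod_range_succ c (n+1), sum_range_succ v (n+1), mul_inv]
        ring
  intro n hn
  rcases n with _ | m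
  · exact q0
  · exact (key m (by omega)).2

set_option maxHeartbeats 1000000 in
lemma trace_aux {d : ℕ} (A : Matrix (Fin d) (Fin d) ℝ) (γ : Fin d → ℝ)
    (hinj : Function.Injective γ) (hspec : spectrum ℝ A = Set.range γ) :
    ∑ s, γ s = Matrix.trace A := by
  have heval : ∀ μ : ℝ, A.charpoly.eval μ =
      (algebraMap ℝ (Matrix (Fin d) (Fin d) ℝ) μ - A).det := by
    intro μ
    rw [Matrix.charpoly, ← Polynomial.coe_evalRingHom, RingHom.map_det]
    congr 1
    ext i j
    rcases eq_or_ne i j with rfl | hij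
    · simp [Matrix.charmatrix_apply_eq, Matrix.algebraMap_matrix_apply]
    · simp [Matrix.charmatrix_apply_ne _ _ _ hij, Matrix.algebraMap_matrix_apply, hij]
  have hroot : ∀ s : Fin d, A.charpoly.IsRoot (γ s) := by
    intro s
    have hmem : γ s ∈ spectrum ℝ A := hspec ▸ Set.mem_range_self s
    rw [spectrum.mem_iff] at hmem
    rw [IsRoot, heval]
    by_contra hne
    exact hmem ((Matrix.isUnit_iff_isUnit_det _).mpr (isUnit_iff_ne_zero.mpr hne))
  have hne : A.charpoly ≠ 0 := A.charpoly_monic.ne_zero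
  set m : Multiset ℝ := Finset.univ.val.map γ with hm
  have hnodup : m.Nodup := Multiset.Nodup.map hinj Finset.univ.nodup
  have hcardm : Multiset.card m = d := by simp [hm]
  have hle : m ≤ A.charpoly.roots := by
    rw [Multiset.le_iff_count]
    intro a
    by_cases ha : a ∈ m
    · rw [Multiset.count_eq_one_of_mem hnodup ha]
      rw [Multiset.one_le_count_iff_mem, mem_roots hne]
      obtain ⟨s, -, rfl⟩ := Multiset.mem_map.mp ha
      exact hroot s
    · simp [Multiset.count_eq_zero_of_notMem ha]
  have hdeg : A.charpoly.natDegree = d := by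
    rw [Matrix.charpoly_natDegree_eq_dim, Fintype.card_fin]
  have hcard : Multiset.card A.charpoly.roots ≤ d := by
    exact (Polynomial.card_roots' A.charpoly).trans (le_of_eq hdeg)
  have hroots : m = A.charpoly.roots :=
    Multiset.eq_of_le_of_card_le hle (by omega)
  have hsplit : A.charpoly.Splits := by
    rw [splits_iff_card_roots, ← hroots, hcardm, hdeg]
  rw [Matrix.trace_eq_sum_roots_charpoly_of_splits hsplit, ← hroots]
  simp [hm, Finset.sum]


/-- The subleading coefficient ratios `χ₁(n)` of the forward
eigenpolynomials `ψₙ` and `χ₁^σ(n)` of the backward eigenpolynomials `φₙ`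
(the latter shifted by `Σ γₛ`, the eigenvalues of the truncated matrix `L₁`)
satisfy `χ₁(n+1) + χ₁^σ(n) = −v₀`. -/
theorem chi_identity (N : ℕ) (hN : 2 ≤ N)
    (v c : ℕ → ℝ) (hc : ∀ n ≤ N - 2, 0 < c n)
    (ψ φ : ℕ → Polynomial ℝ)
    (hψ0 : ψ 0 = 1)
    (hψ1 : C (c 0) * ψ 1 = (X - C (v 0)) * ψ 0)
    (hψ : ∀ n, 1 ≤ n → n ≤ N - 2 →
      C (c n) * ψ (n + 1) = (X - C (v n)) * ψ n - C (c (n - 1)) * ψ (n - 1))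
    (hφ0 : φ (N - 1) = 1)
    (hφ1 : C (c (N - 2)) * φ (N - 2) = (X - C (v (N - 1))) * φ (N - 1))
    (hφ : ∀ n, 1 ≤ n → n ≤ N - 2 →
      C (c (n - 1)) * φ (n - 1) = (X - C (v n)) * φ n - C (c n) * φ (n + 1))
    (γ : Fin (N - 1) → ℝ) (hγmono : StrictMono γ)
    (hγ : spectrum ℝ
      (Matrix.of (fun i j : Fin (N - 1) =>
        (if (i : ℕ) + 1 = (j : ℕ) + 1 then v ((i : ℕ) + 1) else
          if (i : ℕ) + 1 + 1 = (j : ℕ) + 1 then c ((i : ℕ) + 1) else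
          if (j : ℕ) + 1 + 1 = (i : ℕ) + 1 then c ((j : ℕ) + 1) else 0)))
      = Set.range γ) :
    (let χ₁ : ℕ → ℝ := fun n => (ψ n).coeff (n - 1) / (ψ n).coeff n
    let χ₁σ : ℕ → ℝ := fun n =>
      (φ n).coeff (N - 2 - n) / (φ n).coeff (N - 1 - n) + ∑ s : Fin (N - 1), γ s
    ∀ n ≤ N - 2, χ₁ (n + 1) + χ₁σ n = -v 0) := by
  intro χ₁ χ₁σ n hn
  have hc' : ∀ k ≤ N - 2, c k ≠ 0 := fun k hk => (hc k hk).ne'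
  -- forward polynomials
  have Pψ := jacobi_aux (N - 2) v c hc' ψ hψ0 hψ1 hψ
  -- backward polynomials, reindexed
  set ψ' : ℕ → Polynomial ℝ := fun m => φ (N - 1 - m) with hψ'
  set v' : ℕ → ℝ := fun k => v (N - 1 - k) with hv'
  set c' : ℕ → ℝ := fun k => c (N - 2 - k) with hc''
  have hc'2 : ∀ k ≤ N - 2, c' k ≠ 0 := fun k _ => hc' (N - 2 - k) (by omega)
  have h0' : ψ' 0 = 1 := by simpa [hψ'] using hφ0
  have h1' : C (c' 0) * ψ' 1 = (X - C (v' 0)) * ψ' 0 := by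
    simp only [hψ', hv', hc'']
    rw [show N - 1 - 1 = N - 2 from by omega, show N - 2 - 0 = N - 2 from by omega,
      show N - 1 - 0 = N - 1 from by omega]
    exact hφ1
  have hrec' : ∀ m, 1 ≤ m → m ≤ N - 2 →
      C (c' m) * ψ' (m + 1) = (X - C (v' m)) * ψ' m - C (c' (m - 1)) * ψ' (m - 1) := by
    intro m hm1 hm2
    have e := hφ (N - 1 - m) (by omega) (by omega)
    simp only [hψ', hv', hc'']
    rw [show N - 1 - (m + 1) = N - 1 - m - 1 from by omega,
      show N - 2 - m = N - 1 - m - 1 from by omega,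
      show N - 2 - (m - 1) = N - 1 - m from by omega,
      show N - 1 - (m - 1) = N - 1 - m + 1 from by omega]
    exact e
  have Pφ := jacobi_aux (N - 2) v' c' hc'2 ψ' h0' h1' hrec'
  -- χ₁ (n+1)
  have Hψ := Pψ (n + 1) (by omega)
  have hprodψ : (∏ k ∈ range (n + 1), c k)⁻¹ ≠ 0 := by
    refine inv_ne_zero (prod_ne_zero_iff.mpr fun k hk => hc' k ?_)
    simp only [mem_range] at hk; omega
  have e1 : χ₁ (n + 1) = -(∑ k ∈ range (n + 1), v k) := by
    show (ψ (n + 1)).coeff (n + 1 - 1) / (ψ (n + 1)).coeff (n + 1) = _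
    rw [Hψ.2.1, Hψ.2.2 (by omega), mul_div_cancel_right₀ _ hprodψ]
  -- χ₁σ n (without the γ sum)
  set m : ℕ := N - 1 - n with hm
  have hm1 : 1 ≤ m := by omega
  have Hφ := Pφ m (by omega)
  have hprodφ : (∏ k ∈ range m, c' k)⁻¹ ≠ 0 := by
    refine inv_ne_zero (prod_ne_zero_iff.mpr fun k hk => hc'2 k ?_)
    simp only [mem_range] at hk; omega
  have hφn1 : (φ n).coeff (N - 1 - n) = (ψ' m).coeff m := by
    simp only [hψ']
    rw [show N - 1 - m = n from by omega, show N - 1 - n = m from hm]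
  have hφn2 : (φ n).coeff (N - 2 - n) = (ψ' m).coeff (m - 1) := by
    simp only [hψ']
    rw [show N - 1 - m = n from by omega, show N - 2 - n = m - 1 from by omega]
  have e2 : (φ n).coeff (N - 2 - n) / (φ n).coeff (N - 1 - n)
      = -(∑ k ∈ range m, v (N - 1 - k)) := by
    rw [hφn1, hφn2, Hφ.2.1, Hφ.2.2 hm1, mul_div_cancel_right₀ _ hprodφ]
  -- sum of eigenvalues = trace
  have hsum : ∑ s : Fin (N - 1), γ s = ∑ k ∈ range (N - 1), v (k + 1) := by
    rw [trace_aux _ γ hγmono.injective hγ]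
    rw [Matrix.trace]
    rw [← Fin.sum_univ_eq_sum_range (fun k => v (k + 1)) (N - 1)]
    exact Finset.sum_congr rfl fun i _ => by simp [Matrix.diag]
  -- final arithmetic
  show χ₁ (n + 1) + ((φ n).coeff (N - 2 - n) / (φ n).coeff (N - 1 - n)
    + ∑ s : Fin (N - 1), γ s) = -v 0
  rw [e1, e2, hsum]
  have S1 : ∑ k ∈ range m, v (N - 1 - k) = ∑ k ∈ range m, v (n + 1 + k) := by
    rw [← Finset.sum_range_reflect]
    refine Finset.sum_congr rfl fun k hk => ?_
    simp only [mem_range] at hk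
    congr 1; omega
  have S2 : ∑ k ∈ range (n + 1), v k + ∑ k ∈ range m, v (n + 1 + k)
      = ∑ k ∈ range N, v k := by
    rw [← Finset.sum_range_add, show n + 1 + m = N from by omega]
  have S3 : ∑ k ∈ range N, v k = (∑ k ∈ range (N - 1), v (k + 1)) + v 0 := by
    rw [show N = (N - 1) + 1 from by omega, Finset.sum_range_succ']; norm_num
  rw [S1]
  linarith [S2, S3]
end

section
/- Let N ≥ 2 and let U ⊂ ℝ^N × ℝ^{N−1} be the open set of points (E_1,…,E_N, γ_1,…,γ_{N−1}) with E_k ≠ γ_s for all k, s. On U define the smooth functions w_s(E,γ) = Π_{k=1}^N (γ_s − E_k) for s = 1,…,N−1 and r_k(E,γ) = Π_{s=1}^{N−1}(E_k − γ_s) for k = 1,…,N. Then the differential 2-forms Σ_{s=1}^{N−1} (dw_s / w_s) ∧ dγ_s and Σ_{k=1}^{N} (dr_k / r_k) ∧ dE_k are both equal on U to Σ_{k=1}^{N} Σ_{s=1}^{N−1} (E_k − γ_s)^{−1} dE_k ∧ dγ_s; in particular Σ_s (dw_s/w_s) ∧ dγ_s = Σ_k (dr_k/r_k) ∧ dE_k.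 -/
lemma dlog_prod {ι : Type*} [Fintype ι] [DecidableEq ι] {E : Type*} [NormedAddCommGroup E]
    [NormedSpace ℝ E] (g : ι → E → ℝ) (g' : ι → E →L[ℝ] ℝ) (x : E)
    (hg : ∀ i, HasFDerivAt (g i) (g' i) x) (hne : ∀ i, g i x ≠ 0) (u : E) :
    fderiv ℝ (fun y => ∏ i, g i y) x u / (∏ i, g i x) = ∑ i, g' i u / g i x := by
  have h := (HasFDerivAt.finset_prod (u := Finset.univ) (fun i _ => hg i)).fderiv
  rw [h]
  rw [ContinuousLinearMap.sum_apply, Finset.sum_div]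
  refine Finset.sum_congr rfl fun i _ => ?_
  rw [ContinuousLinearMap.smul_apply, smul_eq_mul,
    ← Finset.mul_prod_erase Finset.univ (g · x) (Finset.mem_univ i)]
  have hpe : (∏ j ∈ Finset.univ.erase i, g j x) ≠ 0 :=
    Finset.prod_ne_zero_iff.mpr fun j _ => hne j
  rw [mul_comm (g i x), mul_div_mul_left _ _ hpe]

/-- On the open set where `E_k ≠ γ_s` for all `k, s`, the 2-forms
`Σ_s (dw_s/w_s) ∧ dγ_s` and `Σ_k (dr_k/r_k) ∧ dE_k` both equal
`Σ_{k,s} (E_k − γ_s)⁻¹ dE_k ∧ dγ_s`; in particular they are equal to each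
other.  The forms are evaluated as antisymmetric bilinear forms on pairs of
tangent vectors `u, t` at every point `x` of `U`, with
`(α ∧ β)(u,t) = α(u)β(t) − α(t)β(u)` and `df(u) = (fderiv ℝ f x) u`. -/
theorem darboux_two_form_identity (N : ℕ) (hN : 2 ≤ N) :
    (let w : Fin (N - 1) → ((Fin N → ℝ) × (Fin (N - 1) → ℝ)) → ℝ := fun s x =>
      ∏ k : Fin N, (x.2 s - x.1 k)
    let r : Fin N → ((Fin N → ℝ) × (Fin (N - 1) → ℝ)) → ℝ := fun k x =>
      ∏ s : Fin (N - 1), (x.1 k - x.2 s)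
    ∀ x : (Fin N → ℝ) × (Fin (N - 1) → ℝ),
      (∀ (k : Fin N) (s : Fin (N - 1)), x.1 k ≠ x.2 s) →
      ∀ u t : (Fin N → ℝ) × (Fin (N - 1) → ℝ),
        (∑ s : Fin (N - 1),
            ((fderiv ℝ (w s) x u) / w s x * t.2 s -
              (fderiv ℝ (w s) x t) / w s x * u.2 s)
          = ∑ k : Fin N, ∑ s : Fin (N - 1),
              (x.1 k - x.2 s)⁻¹ * (u.1 k * t.2 s - t.1 k * u.2 s)) ∧
        (∑ k : Fin N,
            ((fderiv ℝ (r k) x u) / r k x * t.1 k -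
              (fderiv ℝ (r k) x t) / r k x * u.1 k)
          = ∑ k : Fin N, ∑ s : Fin (N - 1),
              (x.1 k - x.2 s)⁻¹ * (u.1 k * t.2 s - t.1 k * u.2 s)) ∧
        (∑ s : Fin (N - 1),
            ((fderiv ℝ (w s) x u) / w s x * t.2 s -
              (fderiv ℝ (w s) x t) / w s x * u.2 s)
          = ∑ k : Fin N,
              ((fderiv ℝ (r k) x u) / r k x * t.1 k -
                (fderiv ℝ (r k) x t) / r k x * u.1 k))) := by
  intro w r x hx u t
  have hw : ∀ (s : Fin (N - 1)) (v : (Fin N → ℝ) × (Fin (N - 1) → ℝ)),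
      fderiv ℝ (w s) x v / w s x = ∑ k : Fin N, (v.2 s - v.1 k) / (x.2 s - x.1 k) := by
    intro s v
    exact dlog_prod (fun k y => y.2 s - y.1 k)
      (fun k => (ContinuousLinearMap.proj s).comp
          (ContinuousLinearMap.snd ℝ (Fin N → ℝ) (Fin (N - 1) → ℝ)) -
        (ContinuousLinearMap.proj k).comp
          (ContinuousLinearMap.fst ℝ (Fin N → ℝ) (Fin (N - 1) → ℝ))) x
      (fun k => by
        exact (((ContinuousLinearMap.proj s).comp
            (ContinuousLinearMap.snd ℝ (Fin N → ℝ) (Fin (N - 1) → ℝ))).hasFDerivAt).sub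
          (((ContinuousLinearMap.proj k).comp
            (ContinuousLinearMap.fst ℝ (Fin N → ℝ) (Fin (N - 1) → ℝ))).hasFDerivAt))
      (fun k => sub_ne_zero.mpr (hx k s).symm) v
  have hr : ∀ (k : Fin N) (v : (Fin N → ℝ) × (Fin (N - 1) → ℝ)),
      fderiv ℝ (r k) x v / r k x = ∑ s : Fin (N - 1), (v.1 k - v.2 s) / (x.1 k - x.2 s) := by
    intro k v
    exact dlog_prod (fun s y => y.1 k - y.2 s)
      (fun s => (ContinuousLinearMap.proj k).comp
          (ContinuousLinearMap.fst ℝ (Fin N → ℝ) (Fin (N - 1) → ℝ)) -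
        (ContinuousLinearMap.proj s).comp
          (ContinuousLinearMap.snd ℝ (Fin N → ℝ) (Fin (N - 1) → ℝ))) x
      (fun s => by
        exact (((ContinuousLinearMap.proj k).comp
            (ContinuousLinearMap.fst ℝ (Fin N → ℝ) (Fin (N - 1) → ℝ))).hasFDerivAt).sub
          (((ContinuousLinearMap.proj s).comp
            (ContinuousLinearMap.snd ℝ (Fin N → ℝ) (Fin (N - 1) → ℝ))).hasFDerivAt))
      (fun s => sub_ne_zero.mpr (hx k s)) v
  have hW : (∑ s : Fin (N - 1),
        ((fderiv ℝ (w s) x u) / w s x * t.2 s - (fderiv ℝ (w s) x t) / w s x * u.2 s))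
      = ∑ k : Fin N, ∑ s : Fin (N - 1),
          (x.1 k - x.2 s)⁻¹ * (u.1 k * t.2 s - t.1 k * u.2 s) := by
    rw [Finset.sum_comm]
    refine Finset.sum_congr rfl fun s _ => ?_
    rw [hw s u, hw s t, Finset.sum_mul, Finset.sum_mul, ← Finset.sum_sub_distrib]
    refine Finset.sum_congr rfl fun k _ => ?_
    have h1 : x.1 k - x.2 s ≠ 0 := sub_ne_zero.mpr (hx k s)
    have h2 : x.2 s - x.1 k ≠ 0 := sub_ne_zero.mpr (hx k s).symm
    field_simp
    ring
  have hR : (∑ k : Fin N,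
        ((fderiv ℝ (r k) x u) / r k x * t.1 k - (fderiv ℝ (r k) x t) / r k x * u.1 k))
      = ∑ k : Fin N, ∑ s : Fin (N - 1),
          (x.1 k - x.2 s)⁻¹ * (u.1 k * t.2 s - t.1 k * u.2 s) := by
    refine Finset.sum_congr rfl fun k _ => ?_
    rw [hr k u, hr k t, Finset.sum_mul, Finset.sum_mul, ← Finset.sum_sub_distrib]
    refine Finset.sum_congr rfl fun s _ => ?_
    have h1 : x.1 k - x.2 s ≠ 0 := sub_ne_zero.mpr (hx k s)
    field_simp
    ring
  exact ⟨hW, hR, hW.trans hR.symm⟩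
end
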